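/- arXiv:1506.06180 — 3 statements merged into one kernel-verified Lean document; each statement's English description precedes it below -/
import Mathlib

section
/- Let constants σ₀, β₀, μ₀, b₀ = μ₀ - σ₀²/2, c₀, λ₀, ρ, x̄, ȳ ∈ ℝ be given. Define on smooth functions u(t, x, y, z) on ℝ⁴ the constant-coefficient operator ℋ := ∂_t + (1/2)σ₀² ∂_x² + ρσ₀β₀ ∂_x∂_y + (1/2)β₀² ∂_y² + b₀ ∂_x + c₀ ∂_y + (1/2)λ₀² ∂_z² + ρβ₀λ₀ ∂_y∂_z + μ₀ ∂_x∂_z, the first-order operators ℒ_X := (μ₀ - σ₀²/2) I + σ₀² ∂_x + ρσ₀β₀ ∂_y + μ₀ ∂_z and ℒ_Y := c₀ I + β₀² ∂_y + ρσ₀β₀ ∂_x + ρβ₀λ₀ ∂_z, and for s ∈ ℝ the operators (ℳ_X(s) u)(t,x,y,z) := (x - x̄) u(t,x,y,z) + (s - t)(ℒ_X u)(t,x,y,z) and (ℳ_Y(s) u)(t,x,y,z) := (y - ȳ) u(t,x,y,z) + (s - t)(ℒ_Y u)(t,x,y,z). If v is a smooth function with ℋ v = 0 everywhere, then for all nonnegative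 integers k, l and every s ∈ ℝ, ℋ (ℳ_X(s)^k ℳ_Y(s)^l v) = 0. -/
noncomputable section

/-- Functions of `(t, x, y, z)`. -/
abbrev R4 := ℝ → ℝ → ℝ → ℝ → ℝ

def d4T (F : R4) : R4 := fun t x y z => deriv (fun s => F s x y z) t
def d4X (F : R4) : R4 := fun t x y z => deriv (fun u => F t u y z) x
def d4Y (F : R4) : R4 := fun t x y z => deriv (fun u => F t x u z) y
def d4Z (F : R4) : R4 := fun t x y z => deriv (fun u => F t x y u) z

/-- The constant-coefficient parabolic operator `ℋ = ∂_t + 𝒜₀ + 𝒞₀`. -/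
def Hop (σ0 β0 b0 c0 lam0 ρ μ0 : ℝ) (F : R4) : R4 := fun t x y z =>
  d4T F t x y z
  + (1/2) * σ0^2 * d4X (d4X F) t x y z
  + ρ * σ0 * β0 * d4X (d4Y F) t x y z
  + (1/2) * β0^2 * d4Y (d4Y F) t x y z
  + b0 * d4X F t x y z
  + c0 * d4Y F t x y z
  + (1/2) * lam0^2 * d4Z (d4Z F) t x y z
  + ρ * β0 * lam0 * d4Y (d4Z F) t x y z
  + μ0 * d4X (d4Z F) t x y z

/-- The first-order operator `ℒ_X = (μ₀ - σ₀²/2) I + σ₀² ∂_x + ρσ₀β₀ ∂_y + μ₀ ∂_z`. -/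
def LXop (σ0 β0 μ0 ρ : ℝ) (F : R4) : R4 := fun t x y z =>
  (μ0 - σ0^2/2) * F t x y z + σ0^2 * d4X F t x y z
  + ρ * σ0 * β0 * d4Y F t x y z + μ0 * d4Z F t x y z

/-- The first-order operator `ℒ_Y = c₀ I + β₀² ∂_y + ρσ₀β₀ ∂_x + ρβ₀λ₀ ∂_z`. -/
def LYop (σ0 β0 c0 lam0 ρ : ℝ) (F : R4) : R4 := fun t x y z =>
  c0 * F t x y z + β0^2 * d4Y F t x y z
  + ρ * σ0 * β0 * d4X F t x y z + ρ * β0 * lam0 * d4Z F t x y z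

/-- `ℳ_X(s) = (x - x̄) I + (s - t) ℒ_X`. -/
def MXop (σ0 β0 μ0 ρ xbar s : ℝ) (F : R4) : R4 := fun t x y z =>
  (x - xbar) * F t x y z + (s - t) * LXop σ0 β0 μ0 ρ F t x y z

/-- `ℳ_Y(s) = (y - ȳ) I + (s - t) ℒ_Y`. -/
def MYop (σ0 β0 c0 lam0 ρ ybar s : ℝ) (F : R4) : R4 := fun t x y z =>
  (y - ybar) * F t x y z + (s - t) * LYop σ0 β0 c0 lam0 ρ F t x y z


noncomputable section

abbrev P4 := ℝ × ℝ × ℝ × ℝ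
abbrev Sm (G : P4 → ℝ) : Prop := ContDiff ℝ (⊤ : ℕ∞) G

def DD (w : P4) (G : P4 → ℝ) : P4 → ℝ := fun p => fderiv ℝ G p w

def eT : P4 := (1,0,0,0)
def eX : P4 := (0,1,0,0)
def eY : P4 := (0,0,1,0)
def eZ : P4 := (0,0,0,1)


@[simp] lemma eT1 : eT.1 = 1 := rfl
@[simp] lemma eT2 : eT.2.1 = 0 := rfl
@[simp] lemma eT3 : eT.2.2.1 = 0 := rfl
@[simp] lemma eT4 : eT.2.2.2 = 0 := rfl
@[simp] lemma eX1 : eX.1 = 0 := rfl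
@[simp] lemma eX2 : eX.2.1 = 1 := rfl
@[simp] lemma eX3 : eX.2.2.1 = 0 := rfl
@[simp] lemma eX4 : eX.2.2.2 = 0 := rfl
@[simp] lemma eY1 : eY.1 = 0 := rfl
@[simp] lemma eY2 : eY.2.1 = 0 := rfl
@[simp] lemma eY3 : eY.2.2.1 = 1 := rfl
@[simp] lemma eY4 : eY.2.2.2 = 0 := rfl
@[simp] lemma eZ1 : eZ.1 = 0 := rfl
@[simp] lemma eZ2 : eZ.2.1 = 0 := rfl
@[simp] lemma eZ3 : eZ.2.2.1 = 0 := rfl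
@[simp] lemma eZ4 : eZ.2.2.2 = 1 := rfl

lemma Sm.diff {G : P4 → ℝ} (hG : Sm G) : Differentiable ℝ G :=
  hG.differentiable (by simp)

lemma DD_smooth {G : P4 → ℝ} (w : P4) (hG : Sm G) : Sm (DD w G) :=
  (hG.fderiv_right (by norm_cast)).clm_apply contDiff_const

lemma DD_symm {G : P4 → ℝ} (hG : Sm G) (a b : P4) : DD a (DD b G) = DD b (DD a G) := by
  funext p
  have hder : Differentiable ℝ (fderiv ℝ G) :=
    (hG.fderiv_right (m := (⊤:ℕ∞)) le_rfl).differentiable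
      (by simp)
  have h1 : ∀ (v w : P4), DD v (DD w G) p = fderiv ℝ (fderiv ℝ G) p v w := by
    intro v w
    show fderiv ℝ (fun q => (fderiv ℝ G q) w) p v = _
    rw [fderiv_clm_apply (hder p) (differentiableAt_const w)]
    simp
  rw [h1, h1]
  exact (hG.contDiffAt.isSymmSndFDerivAt
    (by rw [minSmoothness_of_isRCLikeNormedField]; exact_mod_cast ENat.natCast_le_of_coe_top_le_withTop le_rfl 2)) a b

/-- third-derivative reordering: move `w` innermost. -/
lemma DD3 {A : P4 → ℝ} (hA : Sm A) (w a b : P4) :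
    DD a (DD b (DD w A)) = DD w (DD a (DD b A)) := by
  rw [DD_symm hA b w]
  exact DD_symm (DD_smooth b hA) a w

lemma DD_add {w : P4} {A B : P4 → ℝ} (hA : Sm A) (hB : Sm B) :
    DD w (fun q => A q + B q) = fun q => DD w A q + DD w B q := by
  funext p
  show fderiv ℝ _ p w = _
  rw [fderiv_fun_add (hA.diff p) (hB.diff p)]
  simp [DD]

lemma DD_cmul {w : P4} {c : ℝ} {A : P4 → ℝ} (hA : Sm A) :
    DD w (fun q => c * A q) = fun q => c * DD w A q := by
  funext p
  show fderiv ℝ _ p w = _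
  rw [fderiv_const_mul (hA.diff p) c]
  simp [DD]

lemma DD_mx {w : P4} {xbar : ℝ} {A : P4 → ℝ} (hA : Sm A) :
    DD w (fun q => (q.2.1 - xbar) * A q) =
      fun q => w.2.1 * A q + (q.2.1 - xbar) * DD w A q := by
  funext p
  have hm : HasFDerivAt (fun q : P4 => q.2.1 - xbar)
      ((ContinuousLinearMap.fst ℝ ℝ (ℝ×ℝ)).comp (ContinuousLinearMap.snd ℝ ℝ (ℝ×ℝ×ℝ))) p :=
    (hasFDerivAt_snd.fst).sub_const xbar
  have h := (hm.fun_mul ((hA.diff p).hasFDerivAt)).fderiv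
  show fderiv ℝ _ p w = _
  rw [h]
  simp [DD]
  ring

lemma DD_my {w : P4} {ybar : ℝ} {A : P4 → ℝ} (hA : Sm A) :
    DD w (fun q => (q.2.2.1 - ybar) * A q) =
      fun q => w.2.2.1 * A q + (q.2.2.1 - ybar) * DD w A q := by
  funext p
  have hm : HasFDerivAt (fun q : P4 => q.2.2.1 - ybar)
      ((ContinuousLinearMap.fst ℝ ℝ ℝ).comp
        ((ContinuousLinearMap.snd ℝ ℝ (ℝ×ℝ)).comp (ContinuousLinearMap.snd ℝ ℝ (ℝ×ℝ×ℝ)))) p :=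
    (hasFDerivAt_snd.snd.fst).sub_const ybar
  have h := (hm.fun_mul ((hA.diff p).hasFDerivAt)).fderiv
  show fderiv ℝ _ p w = _
  rw [h]
  simp [DD]
  ring

lemma DD_tau {w : P4} {s : ℝ} {A : P4 → ℝ} (hA : Sm A) :
    DD w (fun q => (s - q.1) * A q) =
      fun q => -w.1 * A q + (s - q.1) * DD w A q := by
  funext p
  have hm : HasFDerivAt (fun q : P4 => s - q.1)
      (-(ContinuousLinearMap.fst ℝ ℝ (ℝ×ℝ×ℝ))) p := by
    simpa using (hasFDerivAt_const (𝕜 := ℝ) s p).fun_sub (hasFDerivAt_fst (𝕜 := ℝ) (p := p))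
  have h := (hm.fun_mul ((hA.diff p).hasFDerivAt)).fderiv
  show fderiv ℝ _ p w = _
  rw [h]
  simp [DD]
  ring
section Ops

def LXU (σ0 β0 μ0 ρ : ℝ) (G : P4 → ℝ) : P4 → ℝ := fun p =>
  (μ0 - σ0^2/2) * G p + σ0^2 * DD eX G p + ρ*σ0*β0 * DD eY G p + μ0 * DD eZ G p

def LYU (σ0 β0 c0 lam0 ρ : ℝ) (G : P4 → ℝ) : P4 → ℝ := fun p =>
  c0 * G p + β0^2 * DD eY G p + ρ*σ0*β0 * DD eX G p + ρ*β0*lam0 * DD eZ G p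

def HU (σ0 β0 b0 c0 lam0 ρ μ0 : ℝ) (G : P4 → ℝ) : P4 → ℝ := fun p =>
  DD eT G p + (1/2)*σ0^2 * DD eX (DD eX G) p + ρ*σ0*β0 * DD eX (DD eY G) p
  + (1/2)*β0^2 * DD eY (DD eY G) p + b0 * DD eX G p + c0 * DD eY G p
  + (1/2)*lam0^2 * DD eZ (DD eZ G) p + ρ*β0*lam0 * DD eY (DD eZ G) p
  + μ0 * DD eX (DD eZ G) p

def MXU (σ0 β0 μ0 ρ xbar s : ℝ) (G : P4 → ℝ) : P4 → ℝ := fun p =>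
  (p.2.1 - xbar) * G p + (s - p.1) * LXU σ0 β0 μ0 ρ G p

def MYU (σ0 β0 c0 lam0 ρ ybar s : ℝ) (G : P4 → ℝ) : P4 → ℝ := fun p =>
  (p.2.2.1 - ybar) * G p + (s - p.1) * LYU σ0 β0 c0 lam0 ρ G p

variable (σ0 β0 μ0 b0 c0 lam0 ρ xbar ybar s : ℝ) {A B : P4 → ℝ}

lemma Sm_mx {xb : ℝ} (hA : Sm A) : Sm (fun q => (q.2.1 - xb) * A q) :=
  ((contDiff_snd.fst).sub contDiff_const).mul hA

lemma Sm_my {yb : ℝ} (hA : Sm A) : Sm (fun q => (q.2.2.1 - yb) * A q) :=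
  ((contDiff_snd.snd.fst).sub contDiff_const).mul hA

lemma Sm_tau {s' : ℝ} (hA : Sm A) : Sm (fun q => (s' - q.1) * A q) :=
  (contDiff_const.sub contDiff_fst).mul hA

lemma LXU_smooth (hA : Sm A) : Sm (LXU σ0 β0 μ0 ρ A) :=
  (((contDiff_const.mul hA).add (contDiff_const.mul (DD_smooth eX hA))).add
    (contDiff_const.mul (DD_smooth eY hA))).add (contDiff_const.mul (DD_smooth eZ hA))

lemma LYU_smooth (hA : Sm A) : Sm (LYU σ0 β0 c0 lam0 ρ A) :=
  (((contDiff_const.mul hA).add (contDiff_const.mul (DD_smooth eY hA))).add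
    (contDiff_const.mul (DD_smooth eX hA))).add (contDiff_const.mul (DD_smooth eZ hA))

lemma MXU_smooth (hA : Sm A) : Sm (MXU σ0 β0 μ0 ρ xbar s A) :=
  (Sm_mx hA).add (Sm_tau (LXU_smooth σ0 β0 μ0 ρ hA))

lemma MYU_smooth (hA : Sm A) : Sm (MYU σ0 β0 c0 lam0 ρ ybar s A) :=
  (Sm_my hA).add (Sm_tau (LYU_smooth σ0 β0 c0 lam0 ρ hA))

lemma HU_add (hA : Sm A) (hB : Sm B) :
    HU σ0 β0 b0 c0 lam0 ρ μ0 (fun q => A q + B q)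
      = fun q => HU σ0 β0 b0 c0 lam0 ρ μ0 A q + HU σ0 β0 b0 c0 lam0 ρ μ0 B q := by
  funext p
  simp only [HU, DD_add hA hB, DD_add (DD_smooth eX hA) (DD_smooth eX hB),
    DD_add (DD_smooth eY hA) (DD_smooth eY hB), DD_add (DD_smooth eZ hA) (DD_smooth eZ hB)]
  ring

lemma HU_cmul {c : ℝ} (hA : Sm A) :
    HU σ0 β0 b0 c0 lam0 ρ μ0 (fun q => c * A q)
      = fun q => c * HU σ0 β0 b0 c0 lam0 ρ μ0 A q := by
  funext p
  simp only [HU, DD_cmul hA, DD_cmul (DD_smooth eX hA),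
    DD_cmul (DD_smooth eY hA), DD_cmul (DD_smooth eZ hA)]
  ring

lemma HU_mx (hA : Sm A) :
    HU σ0 β0 b0 c0 lam0 ρ μ0 (fun q => (q.2.1 - xbar) * A q)
      = fun q => (q.2.1 - xbar) * HU σ0 β0 b0 c0 lam0 ρ μ0 A q
        + (b0 * A q + σ0^2 * DD eX A q + ρ*σ0*β0 * DD eY A q + μ0 * DD eZ A q) := by
  funext p
  simp only [HU, DD_mx hA, DD_mx (DD_smooth eX hA), DD_mx (DD_smooth eY hA),
    DD_mx (DD_smooth eZ hA), DD_add hA (Sm_mx (DD_smooth eX hA)),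
    eT1, eT2, eT3, eT4, eX1, eX2, eX3, eX4, eY1, eY2, eY3, eY4, eZ1, eZ2, eZ3, eZ4, zero_mul, one_mul, zero_add, add_zero]
  ring

lemma HU_my (hA : Sm A) :
    HU σ0 β0 b0 c0 lam0 ρ μ0 (fun q => (q.2.2.1 - ybar) * A q)
      = fun q => (q.2.2.1 - ybar) * HU σ0 β0 b0 c0 lam0 ρ μ0 A q
        + (c0 * A q + β0^2 * DD eY A q + ρ*σ0*β0 * DD eX A q + ρ*β0*lam0 * DD eZ A q) := by
  funext p
  simp only [HU, DD_my hA, DD_my (DD_smooth eX hA), DD_my (DD_smooth eY hA),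
    DD_my (DD_smooth eZ hA), DD_add hA (Sm_my (DD_smooth eY hA)),
    eT1, eT2, eT3, eT4, eX1, eX2, eX3, eX4, eY1, eY2, eY3, eY4, eZ1, eZ2, eZ3, eZ4, zero_mul, one_mul, zero_add, add_zero]
  ring

lemma HU_tau (hA : Sm A) :
    HU σ0 β0 b0 c0 lam0 ρ μ0 (fun q => (s - q.1) * A q)
      = fun q => -A q + (s - q.1) * HU σ0 β0 b0 c0 lam0 ρ μ0 A q := by
  funext p
  simp only [HU, DD_tau hA, DD_tau (DD_smooth eX hA), DD_tau (DD_smooth eY hA),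
    DD_tau (DD_smooth eZ hA), eT1, eX1, eY1, eZ1, neg_zero, zero_mul, one_mul, neg_one_mul,
    zero_add, add_zero]
  ring

end Ops
lemma DD_def (w : P4) (G : P4 → ℝ) (p : P4) : fderiv ℝ G p w = DD w G p := rfl

lemma HU_DD_zero (σ0 β0 μ0 b0 c0 lam0 ρ : ℝ) {A : P4 → ℝ} (hA : Sm A)
    (h0 : ∀ p, HU σ0 β0 b0 c0 lam0 ρ μ0 A p = 0) (w : P4) (p : P4) :
    HU σ0 β0 b0 c0 lam0 ρ μ0 (DD w A) p = 0 := by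
  have d1 := ((DD_smooth eT hA).diff p).hasFDerivAt
  have d2 := ((DD_smooth eX (DD_smooth eX hA)).diff p).hasFDerivAt
  have d3 := ((DD_smooth eX (DD_smooth eY hA)).diff p).hasFDerivAt
  have d4 := ((DD_smooth eY (DD_smooth eY hA)).diff p).hasFDerivAt
  have d5 := ((DD_smooth eX hA).diff p).hasFDerivAt
  have d6 := ((DD_smooth eY hA).diff p).hasFDerivAt
  have d7 := ((DD_smooth eZ (DD_smooth eZ hA)).diff p).hasFDerivAt
  have d8 := ((DD_smooth eY (DD_smooth eZ hA)).diff p).hasFDerivAt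
  have d9 := ((DD_smooth eX (DD_smooth eZ hA)).diff p).hasFDerivAt
  have big : HasFDerivAt (HU σ0 β0 b0 c0 lam0 ρ μ0 A)
      (fderiv ℝ (DD eT A) p + ((1/2)*σ0^2) • fderiv ℝ (DD eX (DD eX A)) p
        + (ρ*σ0*β0) • fderiv ℝ (DD eX (DD eY A)) p
        + ((1/2)*β0^2) • fderiv ℝ (DD eY (DD eY A)) p
        + b0 • fderiv ℝ (DD eX A) p + c0 • fderiv ℝ (DD eY A) p
        + ((1/2)*lam0^2) • fderiv ℝ (DD eZ (DD eZ A)) p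
        + (ρ*β0*lam0) • fderiv ℝ (DD eY (DD eZ A)) p
        + μ0 • fderiv ℝ (DD eX (DD eZ A)) p) p := by
    have b2 := d1.add (d2.const_mul ((1/2)*σ0^2))
    have b3 := b2.add (d3.const_mul (ρ*σ0*β0))
    have b4 := b3.add (d4.const_mul ((1/2)*β0^2))
    have b5 := b4.add (d5.const_mul b0)
    have b6 := b5.add (d6.const_mul c0)
    have b7 := b6.add (d7.const_mul ((1/2)*lam0^2))
    have b8 := b7.add (d8.const_mul (ρ*β0*lam0))
    exact b8.add (d9.const_mul μ0)
  have hfun : HU σ0 β0 b0 c0 lam0 ρ μ0 A = fun _ => (0:ℝ) := funext h0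
  rw [hfun] at big
  have hz := big.unique (hasFDerivAt_const (0:ℝ) p)
  have hw := DFunLike.congr_fun hz w
  simp only [ContinuousLinearMap.add_apply, ContinuousLinearMap.coe_smul', Pi.smul_apply,
    smul_eq_mul, ContinuousLinearMap.zero_apply, DD_def] at hw
  simp only [HU, DD_symm hA eT w, DD_symm hA eX w, DD_symm hA eY w, DD_symm hA eZ w,
    DD_symm (DD_smooth eX hA) eX w, DD_symm (DD_smooth eY hA) eX w,
    DD_symm (DD_smooth eY hA) eY w, DD_symm (DD_smooth eZ hA) eZ w,
    DD_symm (DD_smooth eZ hA) eY w, DD_symm (DD_smooth eZ hA) eX w]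
  linear_combination hw

lemma HU_combo_zero (σ0 β0 μ0 b0 c0 lam0 ρ a0 a1 a2 a3 : ℝ) (u1 u2 u3 : P4) {A : P4 → ℝ}
    (hA : Sm A) (h0 : ∀ p, HU σ0 β0 b0 c0 lam0 ρ μ0 A p = 0) (p : P4) :
    HU σ0 β0 b0 c0 lam0 ρ μ0
      (fun q => a0 * A q + a1 * DD u1 A q + a2 * DD u2 A q + a3 * DD u3 A q) p = 0 := by
  have s0 : Sm (fun q => a0 * A q) := contDiff_const.mul hA
  have s1 : Sm (fun q => a1 * DD u1 A q) := contDiff_const.mul (DD_smooth u1 hA)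
  have s2 : Sm (fun q => a2 * DD u2 A q) := contDiff_const.mul (DD_smooth u2 hA)
  have s3 : Sm (fun q => a3 * DD u3 A q) := contDiff_const.mul (DD_smooth u3 hA)
  have s01 : Sm (fun q => a0 * A q + a1 * DD u1 A q) := s0.add s1
  have s012 : Sm (fun q => a0 * A q + a1 * DD u1 A q + a2 * DD u2 A q) := s01.add s2
  rw [congrFun (HU_add σ0 β0 μ0 b0 c0 lam0 ρ s012 s3) p,
    congrFun (HU_add σ0 β0 μ0 b0 c0 lam0 ρ s01 s2) p,
    congrFun (HU_add σ0 β0 μ0 b0 c0 lam0 ρ s0 s1) p,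
    congrFun (HU_cmul σ0 β0 μ0 b0 c0 lam0 ρ hA) p,
    congrFun (HU_cmul σ0 β0 μ0 b0 c0 lam0 ρ (DD_smooth u1 hA)) p,
    congrFun (HU_cmul σ0 β0 μ0 b0 c0 lam0 ρ (DD_smooth u2 hA)) p,
    congrFun (HU_cmul σ0 β0 μ0 b0 c0 lam0 ρ (DD_smooth u3 hA)) p,
    h0 p, HU_DD_zero σ0 β0 μ0 b0 c0 lam0 ρ hA h0 u1 p,
    HU_DD_zero σ0 β0 μ0 b0 c0 lam0 ρ hA h0 u2 p,
    HU_DD_zero σ0 β0 μ0 b0 c0 lam0 ρ hA h0 u3 p]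
  ring

lemma HU_MXU_zero (σ0 β0 μ0 c0 lam0 ρ xbar s : ℝ) {A : P4 → ℝ} (hA : Sm A)
    (h0 : ∀ p, HU σ0 β0 (μ0 - σ0^2/2) c0 lam0 ρ μ0 A p = 0) (p : P4) :
    HU σ0 β0 (μ0 - σ0^2/2) c0 lam0 ρ μ0 (MXU σ0 β0 μ0 ρ xbar s A) p = 0 := by
  have hK : Sm (LXU σ0 β0 μ0 ρ A) := LXU_smooth σ0 β0 μ0 ρ hA
  have hmx : Sm (fun q => (q.2.1 - xbar) * A q) := Sm_mx hA
  have htau : Sm (fun q => (s - q.1) * LXU σ0 β0 μ0 ρ A q) := Sm_tau hK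
  have e0 : MXU σ0 β0 μ0 ρ xbar s A
      = fun q => (q.2.1 - xbar) * A q + (s - q.1) * LXU σ0 β0 μ0 ρ A q := rfl
  have hz : HU σ0 β0 (μ0 - σ0^2/2) c0 lam0 ρ μ0 (LXU σ0 β0 μ0 ρ A) p = 0 := by
    have e1 : LXU σ0 β0 μ0 ρ A = fun q => (μ0 - σ0^2/2) * A q + σ0^2 * DD eX A q
        + ρ*σ0*β0 * DD eY A q + μ0 * DD eZ A q := rfl
    rw [e1]
    exact HU_combo_zero σ0 β0 μ0 (μ0 - σ0^2/2) c0 lam0 ρ (μ0 - σ0^2/2) (σ0^2) (ρ*σ0*β0) μ0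
      eX eY eZ hA h0 p
  rw [e0, congrFun (HU_add σ0 β0 μ0 (μ0 - σ0^2/2) c0 lam0 ρ hmx htau) p,
    congrFun (HU_mx σ0 β0 μ0 (μ0 - σ0^2/2) c0 lam0 ρ xbar hA) p,
    congrFun (HU_tau σ0 β0 μ0 (μ0 - σ0^2/2) c0 lam0 ρ s hK) p, h0 p, hz]
  simp only [LXU]
  ring

lemma HU_MYU_zero (σ0 β0 μ0 b0 c0 lam0 ρ ybar s : ℝ) {A : P4 → ℝ} (hA : Sm A)
    (h0 : ∀ p, HU σ0 β0 b0 c0 lam0 ρ μ0 A p = 0) (p : P4) :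
    HU σ0 β0 b0 c0 lam0 ρ μ0 (MYU σ0 β0 c0 lam0 ρ ybar s A) p = 0 := by
  have hK : Sm (LYU σ0 β0 c0 lam0 ρ A) := LYU_smooth σ0 β0 c0 lam0 ρ hA
  have hmy : Sm (fun q => (q.2.2.1 - ybar) * A q) := Sm_my hA
  have htau : Sm (fun q => (s - q.1) * LYU σ0 β0 c0 lam0 ρ A q) := Sm_tau hK
  have e0 : MYU σ0 β0 c0 lam0 ρ ybar s A
      = fun q => (q.2.2.1 - ybar) * A q + (s - q.1) * LYU σ0 β0 c0 lam0 ρ A q := rfl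
  have hz : HU σ0 β0 b0 c0 lam0 ρ μ0 (LYU σ0 β0 c0 lam0 ρ A) p = 0 := by
    have e1 : LYU σ0 β0 c0 lam0 ρ A = fun q => c0 * A q + β0^2 * DD eY A q
        + ρ*σ0*β0 * DD eX A q + ρ*β0*lam0 * DD eZ A q := rfl
    rw [e1]
    exact HU_combo_zero σ0 β0 μ0 b0 c0 lam0 ρ c0 (β0^2) (ρ*σ0*β0) (ρ*β0*lam0)
      eY eX eZ hA h0 p
  rw [e0, congrFun (HU_add σ0 β0 μ0 b0 c0 lam0 ρ hmy htau) p,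
    congrFun (HU_my σ0 β0 μ0 b0 c0 lam0 ρ ybar hA) p,
    congrFun (HU_tau σ0 β0 μ0 b0 c0 lam0 ρ s hK) p, h0 p, hz]
  simp only [LYU]
  ring
def unc (F : R4) : P4 → ℝ := fun p => F p.1 p.2.1 p.2.2.1 p.2.2.2

lemma d4T_eq {F : R4} (hF : Differentiable ℝ (unc F)) (t x y z : ℝ) :
    d4T F t x y z = DD eT (unc F) (t, x, y, z) := by
  have h1 : HasDerivAt (fun u : ℝ => u) 1 t := hasDerivAt_id t
  have hι : HasDerivAt (fun u : ℝ => ((u, x, y, z) : P4)) eT t :=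
    h1.prodMk ((hasDerivAt_const t x).prodMk ((hasDerivAt_const t y).prodMk (hasDerivAt_const t z)))
  exact ((hF (t, x, y, z)).hasFDerivAt.comp_hasDerivAt t hι).deriv

lemma d4X_eq {F : R4} (hF : Differentiable ℝ (unc F)) (t x y z : ℝ) :
    d4X F t x y z = DD eX (unc F) (t, x, y, z) := by
  have h1 : HasDerivAt (fun u : ℝ => u) 1 x := hasDerivAt_id x
  have hι : HasDerivAt (fun u : ℝ => ((t, u, y, z) : P4)) eX x :=
    (hasDerivAt_const x t).prodMk (h1.prodMk ((hasDerivAt_const x y).prodMk (hasDerivAt_const x z)))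
  exact ((hF (t, x, y, z)).hasFDerivAt.comp_hasDerivAt x hι).deriv

lemma d4Y_eq {F : R4} (hF : Differentiable ℝ (unc F)) (t x y z : ℝ) :
    d4Y F t x y z = DD eY (unc F) (t, x, y, z) := by
  have h1 : HasDerivAt (fun u : ℝ => u) 1 y := hasDerivAt_id y
  have hι : HasDerivAt (fun u : ℝ => ((t, x, u, z) : P4)) eY y :=
    (hasDerivAt_const y t).prodMk ((hasDerivAt_const y x).prodMk (h1.prodMk (hasDerivAt_const y z)))
  exact ((hF (t, x, y, z)).hasFDerivAt.comp_hasDerivAt y hι).deriv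

lemma d4Z_eq {F : R4} (hF : Differentiable ℝ (unc F)) (t x y z : ℝ) :
    d4Z F t x y z = DD eZ (unc F) (t, x, y, z) := by
  have h1 : HasDerivAt (fun u : ℝ => u) 1 z := hasDerivAt_id z
  have hι : HasDerivAt (fun u : ℝ => ((t, x, y, u) : P4)) eZ z :=
    (hasDerivAt_const z t).prodMk ((hasDerivAt_const z x).prodMk ((hasDerivAt_const z y).prodMk h1))
  exact ((hF (t, x, y, z)).hasFDerivAt.comp_hasDerivAt z hι).deriv

lemma unc_d4X {F : R4} (hF : Sm (unc F)) : unc (d4X F) = DD eX (unc F) :=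
  funext fun p => d4X_eq hF.diff p.1 p.2.1 p.2.2.1 p.2.2.2

lemma unc_d4Y {F : R4} (hF : Sm (unc F)) : unc (d4Y F) = DD eY (unc F) :=
  funext fun p => d4Y_eq hF.diff p.1 p.2.1 p.2.2.1 p.2.2.2

lemma unc_d4Z {F : R4} (hF : Sm (unc F)) : unc (d4Z F) = DD eZ (unc F) :=
  funext fun p => d4Z_eq hF.diff p.1 p.2.1 p.2.2.1 p.2.2.2

lemma unc_Hop (σ0 β0 b0 c0 lam0 ρ μ0 : ℝ) {F : R4} (hF : Sm (unc F)) (t x y z : ℝ) :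
    Hop σ0 β0 b0 c0 lam0 ρ μ0 F t x y z
      = HU σ0 β0 b0 c0 lam0 ρ μ0 (unc F) (t, x, y, z) := by
  have hdX : Differentiable ℝ (unc (d4X F)) := by
    rw [unc_d4X hF]; exact (DD_smooth eX hF).diff
  have hdY : Differentiable ℝ (unc (d4Y F)) := by
    rw [unc_d4Y hF]; exact (DD_smooth eY hF).diff
  have hdZ : Differentiable ℝ (unc (d4Z F)) := by
    rw [unc_d4Z hF]; exact (DD_smooth eZ hF).diff
  show d4T F t x y z + (1/2) * σ0^2 * d4X (d4X F) t x y z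
      + ρ * σ0 * β0 * d4X (d4Y F) t x y z + (1/2) * β0^2 * d4Y (d4Y F) t x y z
      + b0 * d4X F t x y z + c0 * d4Y F t x y z + (1/2) * lam0^2 * d4Z (d4Z F) t x y z
      + ρ * β0 * lam0 * d4Y (d4Z F) t x y z + μ0 * d4X (d4Z F) t x y z = _
  rw [d4T_eq hF.diff t x y z, d4X_eq hdX t x y z, d4X_eq hdY t x y z, d4Y_eq hdY t x y z,
    d4X_eq hF.diff t x y z, d4Y_eq hF.diff t x y z, d4Z_eq hdZ t x y z, d4Y_eq hdZ t x y z,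
    d4X_eq hdZ t x y z, unc_d4X hF, unc_d4Y hF, unc_d4Z hF]
  show _ = DD eT (unc F) (t,x,y,z) + (1/2)*σ0^2 * DD eX (DD eX (unc F)) (t,x,y,z)
      + ρ*σ0*β0 * DD eX (DD eY (unc F)) (t,x,y,z) + (1/2)*β0^2 * DD eY (DD eY (unc F)) (t,x,y,z)
      + b0 * DD eX (unc F) (t,x,y,z) + c0 * DD eY (unc F) (t,x,y,z)
      + (1/2)*lam0^2 * DD eZ (DD eZ (unc F)) (t,x,y,z)
      + ρ*β0*lam0 * DD eY (DD eZ (unc F)) (t,x,y,z) + μ0 * DD eX (DD eZ (unc F)) (t,x,y,z)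
  ring

lemma unc_LXop (σ0 β0 μ0 ρ : ℝ) {F : R4} (hF : Sm (unc F)) :
    unc (LXop σ0 β0 μ0 ρ F) = LXU σ0 β0 μ0 ρ (unc F) := by
  funext p
  show (μ0 - σ0^2/2) * F p.1 p.2.1 p.2.2.1 p.2.2.2 + σ0^2 * d4X F p.1 p.2.1 p.2.2.1 p.2.2.2
      + ρ * σ0 * β0 * d4Y F p.1 p.2.1 p.2.2.1 p.2.2.2
      + μ0 * d4Z F p.1 p.2.1 p.2.2.1 p.2.2.2 = _
  rw [d4X_eq hF.diff, d4Y_eq hF.diff, d4Z_eq hF.diff]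
  rfl

lemma unc_LYop (σ0 β0 c0 lam0 ρ : ℝ) {F : R4} (hF : Sm (unc F)) :
    unc (LYop σ0 β0 c0 lam0 ρ F) = LYU σ0 β0 c0 lam0 ρ (unc F) := by
  funext p
  show c0 * F p.1 p.2.1 p.2.2.1 p.2.2.2 + β0^2 * d4Y F p.1 p.2.1 p.2.2.1 p.2.2.2
      + ρ * σ0 * β0 * d4X F p.1 p.2.1 p.2.2.1 p.2.2.2
      + ρ * β0 * lam0 * d4Z F p.1 p.2.1 p.2.2.1 p.2.2.2 = _
  rw [d4X_eq hF.diff, d4Y_eq hF.diff, d4Z_eq hF.diff]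
  rfl

lemma unc_MXop (σ0 β0 μ0 ρ xbar s : ℝ) {F : R4} (hF : Sm (unc F)) :
    unc (MXop σ0 β0 μ0 ρ xbar s F) = MXU σ0 β0 μ0 ρ xbar s (unc F) := by
  funext p
  have h := congrFun (unc_LXop σ0 β0 μ0 ρ hF) p
  show (p.2.1 - xbar) * F p.1 p.2.1 p.2.2.1 p.2.2.2
      + (s - p.1) * LXop σ0 β0 μ0 ρ F p.1 p.2.1 p.2.2.1 p.2.2.2 = _
  rw [show LXop σ0 β0 μ0 ρ F p.1 p.2.1 p.2.2.1 p.2.2.2 = LXU σ0 β0 μ0 ρ (unc F) p from h]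
  rfl

lemma unc_MYop (σ0 β0 c0 lam0 ρ ybar s : ℝ) {F : R4} (hF : Sm (unc F)) :
    unc (MYop σ0 β0 c0 lam0 ρ ybar s F) = MYU σ0 β0 c0 lam0 ρ ybar s (unc F) := by
  funext p
  have h := congrFun (unc_LYop σ0 β0 c0 lam0 ρ hF) p
  show (p.2.2.1 - ybar) * F p.1 p.2.1 p.2.2.1 p.2.2.2
      + (s - p.1) * LYop σ0 β0 c0 lam0 ρ F p.1 p.2.1 p.2.2.1 p.2.2.2 = _
  rw [show LYop σ0 β0 c0 lam0 ρ F p.1 p.2.1 p.2.2.1 p.2.2.2 = LYU σ0 β0 c0 lam0 ρ (unc F) p from h]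
  rfl
/-- If `ℋ v = 0`, then `ℋ (ℳ_X(s)^k ℳ_Y(s)^l v) = 0` for all `k, l ∈ ℕ` and `s ∈ ℝ`. -/
theorem H_annihilates_M_powers
    (σ0 β0 μ0 b0 c0 lam0 ρ xbar ybar : ℝ)
    (hb0 : b0 = μ0 - σ0^2/2)
    (v : R4)
    (hv : ContDiff ℝ (⊤ : ℕ∞) (fun p : ℝ × ℝ × ℝ × ℝ => v p.1 p.2.1 p.2.2.1 p.2.2.2))
    (hsol : ∀ t x y z, Hop σ0 β0 b0 c0 lam0 ρ μ0 v t x y z = 0) :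
    ∀ (k l : ℕ) (s t x y z : ℝ),
      Hop σ0 β0 b0 c0 lam0 ρ μ0
        ((MXop σ0 β0 μ0 ρ xbar s)^[k] ((MYop σ0 β0 c0 lam0 ρ ybar s)^[l] v))
        t x y z = 0 := by
  subst hb0
  intro k l s t x y z
  set b0 : ℝ := μ0 - σ0^2/2 with hb
  have base : Sm (unc v) ∧ ∀ p, HU σ0 β0 b0 c0 lam0 ρ μ0 (unc v) p = 0 := by
    refine ⟨hv, fun p => ?_⟩
    have h := hsol p.1 p.2.1 p.2.2.1 p.2.2.2
    rw [unc_Hop σ0 β0 b0 c0 lam0 ρ μ0 (F := v) hv p.1 p.2.1 p.2.2.1 p.2.2.2] at h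
    exact h
  have stepY : ∀ F : R4,
      (Sm (unc F) ∧ ∀ p, HU σ0 β0 b0 c0 lam0 ρ μ0 (unc F) p = 0) →
      (Sm (unc (MYop σ0 β0 c0 lam0 ρ ybar s F)) ∧
        ∀ p, HU σ0 β0 b0 c0 lam0 ρ μ0 (unc (MYop σ0 β0 c0 lam0 ρ ybar s F)) p = 0) := by
    rintro F ⟨h1, h2⟩
    rw [unc_MYop σ0 β0 c0 lam0 ρ ybar s h1]
    exact ⟨MYU_smooth σ0 β0 c0 lam0 ρ ybar s h1,
      fun p => HU_MYU_zero σ0 β0 μ0 b0 c0 lam0 ρ ybar s h1 h2 p⟩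
  have stepX : ∀ F : R4,
      (Sm (unc F) ∧ ∀ p, HU σ0 β0 b0 c0 lam0 ρ μ0 (unc F) p = 0) →
      (Sm (unc (MXop σ0 β0 μ0 ρ xbar s F)) ∧
        ∀ p, HU σ0 β0 b0 c0 lam0 ρ μ0 (unc (MXop σ0 β0 μ0 ρ xbar s F)) p = 0) := by
    rintro F ⟨h1, h2⟩
    rw [unc_MXop σ0 β0 μ0 ρ xbar s h1]
    exact ⟨MXU_smooth σ0 β0 μ0 ρ xbar s h1,
      fun p => HU_MXU_zero σ0 β0 μ0 c0 lam0 ρ xbar s h1 h2 p⟩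
  have itY : ∀ n : ℕ,
      Sm (unc ((MYop σ0 β0 c0 lam0 ρ ybar s)^[n] v)) ∧
        ∀ p, HU σ0 β0 b0 c0 lam0 ρ μ0 (unc ((MYop σ0 β0 c0 lam0 ρ ybar s)^[n] v)) p = 0 := by
    intro n
    induction n with
    | zero => exact base
    | succ n ih =>
      rw [Function.iterate_succ_apply']
      exact stepY _ ih
  have itXY : ∀ m : ℕ,
      Sm (unc ((MXop σ0 β0 μ0 ρ xbar s)^[m] ((MYop σ0 β0 c0 lam0 ρ ybar s)^[l] v))) ∧
        ∀ p, HU σ0 β0 b0 c0 lam0 ρ μ0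
          (unc ((MXop σ0 β0 μ0 ρ xbar s)^[m] ((MYop σ0 β0 c0 lam0 ρ ybar s)^[l] v))) p = 0 := by
    intro m
    induction m with
    | zero => exact itY l
    | succ m ih =>
      rw [Function.iterate_succ_apply']
      exact stepX _ ih
  obtain ⟨hS, hZ⟩ := itXY k
  rw [unc_Hop σ0 β0 b0 c0 lam0 ρ μ0 hS t x y z]
  exact hZ (t, x, y, z)
end
end
end

section
/- Let ℋ, ℳ_X(s), ℳ_Y(s) be as follows: ℋ := ∂_t + (1/2)σ₀² ∂_x² + ρσ₀β₀ ∂_x∂_y + (1/2)β₀² ∂_y² + b₀ ∂_x + c₀ ∂_y + (1/2)λ₀² ∂_z² + ρβ₀λ₀ ∂_y∂_z + μ₀ ∂_x∂_z on smooth functions of (t,x,y,z), ℒ_X := (μ₀ - σ₀²/2) I + σ₀² ∂_x + ρσ₀β₀ ∂_y + μ₀ ∂_z, ℒ_Y := c₀ I + β₀² ∂_y + ρσ₀β₀ ∂_x + ρβ₀λ₀ ∂_z, ℳ_X(s) := (x - x̄) I + (s - t) ℒ_X, ℳ_Y(s) := (y - ȳ) I + (s - t) ℒ_Y. Let v be a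 smooth function with ℋ v = 0, let S be a finite set of triples (n, k, l) of nonnegative integers, and define Q(t,x,y,z) := Σ_{(n,k,l) ∈ S} (T - t)^n (x - x̄)^k (y - ȳ)^l v(t,x,y,z). Then the function q(t,x,y,z) := Σ_{(n,k,l) ∈ S} ∫_t^T (T - s)^n [ℳ_X(s)^k ℳ_Y(s)^l v](t,x,y,z) ds satisfies ℋ q + Q = 0 for t < T and q(T, x, y, z) = 0. -/
noncomputable section

open MeasureTheory

namespace SSF

abbrev Fam := ℝ → R4
abbrev P5 := ℝ × ℝ × ℝ × ℝ × ℝ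

def unc (G : Fam) : P5 → ℝ := fun p => G p.1 p.2.1 p.2.2.1 p.2.2.2.1 p.2.2.2.2
def Sm (G : Fam) : Prop := ContDiff ℝ (⊤ : ℕ∞) (unc G)

def DT (G : Fam) : Fam := fun s => d4T (G s)
def DX (G : Fam) : Fam := fun s => d4X (G s)
def DY (G : Fam) : Fam := fun s => d4Y (G s)
def DZ (G : Fam) : Fam := fun s => d4Z (G s)

def eT : P5 := (0,1,0,0,0)
def eX : P5 := (0,0,1,0,0)
def eY : P5 := (0,0,0,1,0)
def eZ : P5 := (0,0,0,0,1)

lemma one_le_top : (1 : WithTop ℕ∞) ≤ ((⊤ : ℕ∞) : WithTop ℕ∞) := by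
  exact_mod_cast le_top

lemma Sm.diffAt {G : Fam} (hG : Sm G) {p : P5} : DifferentiableAt ℝ (unc G) p :=
  (hG.differentiable (by simp)).differentiableAt

lemma hasDerivAt_sliceT {G : Fam} (hG : Sm G) (s t x y z : ℝ) :
    HasDerivAt (fun u => G s u x y z) (DT G s t x y z) t := by
  have hemb : HasDerivAt (fun u => ((s, u, x, y, z) : P5)) eT t :=
    (hasDerivAt_const t s).prodMk (((hasDerivAt_id t).prodMk
      (((hasDerivAt_const t x).prodMk ((hasDerivAt_const t y).prodMk (hasDerivAt_const t z))))))
  have h2 := (hG.diffAt (p := (s,t,x,y,z))).hasFDerivAt.comp_hasDerivAt t hemb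
  have h3 : deriv (fun u => G s u x y z) t = fderiv ℝ (unc G) (s,t,x,y,z) eT := h2.deriv
  show HasDerivAt _ (deriv (fun u => G s u x y z) t) t
  rw [h3]; exact h2

lemma hasDerivAt_sliceX {G : Fam} (hG : Sm G) (s t x y z : ℝ) :
    HasDerivAt (fun u => G s t u y z) (DX G s t x y z) x := by
  have hemb : HasDerivAt (fun u => ((s, t, u, y, z) : P5)) eX x :=
    (hasDerivAt_const x s).prodMk ((hasDerivAt_const x t).prodMk
      (((hasDerivAt_id x).prodMk ((hasDerivAt_const x y).prodMk (hasDerivAt_const x z)))))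
  have h2 := (hG.diffAt (p := (s,t,x,y,z))).hasFDerivAt.comp_hasDerivAt x hemb
  have h3 : deriv (fun u => G s t u y z) x = fderiv ℝ (unc G) (s,t,x,y,z) eX := h2.deriv
  show HasDerivAt _ (deriv (fun u => G s t u y z) x) x
  rw [h3]; exact h2

lemma hasDerivAt_sliceY {G : Fam} (hG : Sm G) (s t x y z : ℝ) :
    HasDerivAt (fun u => G s t x u z) (DY G s t x y z) y := by
  have hemb : HasDerivAt (fun u => ((s, t, x, u, z) : P5)) eY y :=
    (hasDerivAt_const y s).prodMk ((hasDerivAt_const y t).prodMk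
      (((hasDerivAt_const y x).prodMk ((hasDerivAt_id y).prodMk (hasDerivAt_const y z)))))
  have h2 := (hG.diffAt (p := (s,t,x,y,z))).hasFDerivAt.comp_hasDerivAt y hemb
  have h3 : deriv (fun u => G s t x u z) y = fderiv ℝ (unc G) (s,t,x,y,z) eY := h2.deriv
  show HasDerivAt _ (deriv (fun u => G s t x u z) y) y
  rw [h3]; exact h2

lemma hasDerivAt_sliceZ {G : Fam} (hG : Sm G) (s t x y z : ℝ) :
    HasDerivAt (fun u => G s t x y u) (DZ G s t x y z) z := by
  have hemb : HasDerivAt (fun u => ((s, t, x, y, u) : P5)) eZ z :=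
    (hasDerivAt_const z s).prodMk ((hasDerivAt_const z t).prodMk
      (((hasDerivAt_const z x).prodMk ((hasDerivAt_const z y).prodMk (hasDerivAt_id z)))))
  have h2 := (hG.diffAt (p := (s,t,x,y,z))).hasFDerivAt.comp_hasDerivAt z hemb
  have h3 : deriv (fun u => G s t x y u) z = fderiv ℝ (unc G) (s,t,x,y,z) eZ := h2.deriv
  show HasDerivAt _ (deriv (fun u => G s t x y u) z) z
  rw [h3]; exact h2

lemma fderiv_eT {G : Fam} (hG : Sm G) (s t x y z : ℝ) :
    fderiv ℝ (unc G) (s,t,x,y,z) eT = DT G s t x y z := by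
  have hemb : HasDerivAt (fun u => ((s, u, x, y, z) : P5)) eT t :=
    (hasDerivAt_const t s).prodMk (((hasDerivAt_id t).prodMk
      (((hasDerivAt_const t x).prodMk ((hasDerivAt_const t y).prodMk (hasDerivAt_const t z))))))
  exact ((hG.diffAt (p := (s,t,x,y,z))).hasFDerivAt.comp_hasDerivAt t hemb).deriv.symm

lemma fderiv_eX {G : Fam} (hG : Sm G) (s t x y z : ℝ) :
    fderiv ℝ (unc G) (s,t,x,y,z) eX = DX G s t x y z := by
  have hemb : HasDerivAt (fun u => ((s, t, u, y, z) : P5)) eX x :=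
    (hasDerivAt_const x s).prodMk ((hasDerivAt_const x t).prodMk
      (((hasDerivAt_id x).prodMk ((hasDerivAt_const x y).prodMk (hasDerivAt_const x z)))))
  exact ((hG.diffAt (p := (s,t,x,y,z))).hasFDerivAt.comp_hasDerivAt x hemb).deriv.symm

lemma fderiv_eY {G : Fam} (hG : Sm G) (s t x y z : ℝ) :
    fderiv ℝ (unc G) (s,t,x,y,z) eY = DY G s t x y z := by
  have hemb : HasDerivAt (fun u => ((s, t, x, u, z) : P5)) eY y :=
    (hasDerivAt_const y s).prodMk ((hasDerivAt_const y t).prodMk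
      (((hasDerivAt_const y x).prodMk ((hasDerivAt_id y).prodMk (hasDerivAt_const y z)))))
  exact ((hG.diffAt (p := (s,t,x,y,z))).hasFDerivAt.comp_hasDerivAt y hemb).deriv.symm

lemma fderiv_eZ {G : Fam} (hG : Sm G) (s t x y z : ℝ) :
    fderiv ℝ (unc G) (s,t,x,y,z) eZ = DZ G s t x y z := by
  have hemb : HasDerivAt (fun u => ((s, t, x, y, u) : P5)) eZ z :=
    (hasDerivAt_const z s).prodMk ((hasDerivAt_const z t).prodMk
      (((hasDerivAt_const z x).prodMk ((hasDerivAt_const z y).prodMk (hasDerivAt_id z)))))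
  exact ((hG.diffAt (p := (s,t,x,y,z))).hasFDerivAt.comp_hasDerivAt z hemb).deriv.symm

lemma unc_DT {G : Fam} (hG : Sm G) :
    unc (DT G) = fun p => fderiv ℝ (unc G) p eT := by
  funext p; obtain ⟨s,t,x,y,z⟩ := p; exact (fderiv_eT hG s t x y z).symm

lemma unc_DX {G : Fam} (hG : Sm G) :
    unc (DX G) = fun p => fderiv ℝ (unc G) p eX := by
  funext p; obtain ⟨s,t,x,y,z⟩ := p; exact (fderiv_eX hG s t x y z).symm

lemma unc_DY {G : Fam} (hG : Sm G) :
    unc (DY G) = fun p => fderiv ℝ (unc G) p eY := by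
  funext p; obtain ⟨s,t,x,y,z⟩ := p; exact (fderiv_eY hG s t x y z).symm

lemma unc_DZ {G : Fam} (hG : Sm G) :
    unc (DZ G) = fun p => fderiv ℝ (unc G) p eZ := by
  funext p; obtain ⟨s,t,x,y,z⟩ := p; exact (fderiv_eZ hG s t x y z).symm

lemma contDiff_fderiv_apply {f : P5 → ℝ} (hf : ContDiff ℝ (⊤ : ℕ∞) f) (e : P5) :
    ContDiff ℝ (⊤ : ℕ∞) (fun p => fderiv ℝ f p e) := by
  have h1 : ContDiff ℝ (⊤ : ℕ∞) (fderiv ℝ f) := by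
    apply hf.fderiv_right
    exact_mod_cast le_top
  exact h1.clm_apply contDiff_const

lemma Sm.dT {G : Fam} (hG : Sm G) : Sm (DT G) := by
  rw [Sm, unc_DT hG]; exact contDiff_fderiv_apply hG eT
lemma Sm.dX {G : Fam} (hG : Sm G) : Sm (DX G) := by
  rw [Sm, unc_DX hG]; exact contDiff_fderiv_apply hG eX
lemma Sm.dY {G : Fam} (hG : Sm G) : Sm (DY G) := by
  rw [Sm, unc_DY hG]; exact contDiff_fderiv_apply hG eY
lemma Sm.dZ {G : Fam} (hG : Sm G) : Sm (DZ G) := by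
  rw [Sm, unc_DZ hG]; exact contDiff_fderiv_apply hG eZ

lemma DD_swap {f : P5 → ℝ} (hf : ContDiff ℝ (⊤ : ℕ∞) f) (e₁ e₂ : P5) (p : P5) :
    fderiv ℝ (fun q => fderiv ℝ f q e₂) p e₁ = fderiv ℝ (fun q => fderiv ℝ f q e₁) p e₂ := by
  have hdf : ContDiff ℝ (⊤ : ℕ∞) (fderiv ℝ f) := by
    apply hf.fderiv_right; exact_mod_cast le_top
  have key : ∀ e e' : P5, fderiv ℝ (fun q => fderiv ℝ f q e) p e' =
      fderiv ℝ (fderiv ℝ f) p e' e := by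
    intro e e'
    have h := fderiv_clm_apply (c := fderiv ℝ f) (u := fun _ => e) (x := p)
      ((hdf.differentiable (by simp)).differentiableAt) (differentiableAt_const e)
    rw [h]; simp
  rw [key e₂ e₁, key e₁ e₂]
  exact second_derivative_symmetric
    (fun q => ((hf.differentiable (by simp)) q).hasFDerivAt)
    ((hdf.differentiable (by simp)) p).hasFDerivAt e₁ e₂

/-! ### Swap lemmas -/

lemma DX_DT {G : Fam} (hG : Sm G) : DX (DT G) = DT (DX G) := by
  have h : unc (DX (DT G)) = unc (DT (DX G)) := by
    rw [unc_DX hG.dT, unc_DT hG, unc_DT hG.dX, unc_DX hG]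
    funext p; exact DD_swap hG eX eT p
  funext s t x y z; exact congrFun h (s,t,x,y,z)

lemma DY_DT {G : Fam} (hG : Sm G) : DY (DT G) = DT (DY G) := by
  have h : unc (DY (DT G)) = unc (DT (DY G)) := by
    rw [unc_DY hG.dT, unc_DT hG, unc_DT hG.dY, unc_DY hG]
    funext p; exact DD_swap hG eY eT p
  funext s t x y z; exact congrFun h (s,t,x,y,z)

lemma DZ_DT {G : Fam} (hG : Sm G) : DZ (DT G) = DT (DZ G) := by
  have h : unc (DZ (DT G)) = unc (DT (DZ G)) := by
    rw [unc_DZ hG.dT, unc_DT hG, unc_DT hG.dZ, unc_DZ hG]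
    funext p; exact DD_swap hG eZ eT p
  funext s t x y z; exact congrFun h (s,t,x,y,z)

lemma DY_DX {G : Fam} (hG : Sm G) : DY (DX G) = DX (DY G) := by
  have h : unc (DY (DX G)) = unc (DX (DY G)) := by
    rw [unc_DY hG.dX, unc_DX hG, unc_DX hG.dY, unc_DY hG]
    funext p; exact DD_swap hG eY eX p
  funext s t x y z; exact congrFun h (s,t,x,y,z)

lemma DZ_DX {G : Fam} (hG : Sm G) : DZ (DX G) = DX (DZ G) := by
  have h : unc (DZ (DX G)) = unc (DX (DZ G)) := by
    rw [unc_DZ hG.dX, unc_DX hG, unc_DX hG.dZ, unc_DZ hG]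
    funext p; exact DD_swap hG eZ eX p
  funext s t x y z; exact congrFun h (s,t,x,y,z)

lemma DZ_DY {G : Fam} (hG : Sm G) : DZ (DY G) = DY (DZ G) := by
  have h : unc (DZ (DY G)) = unc (DY (DZ G)) := by
    rw [unc_DZ hG.dY, unc_DY hG, unc_DY hG.dZ, unc_DZ hG]
    funext p; exact DD_swap hG eZ eY p
  funext s t x y z; exact congrFun h (s,t,x,y,z)

/-! ### Combinators -/

def addC (G H : Fam) : Fam := fun s t x y z => G s t x y z + H s t x y z
def smulC (c : ℝ) (G : Fam) : Fam := fun s t x y z => c * G s t x y z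
def smulS (c : ℝ → ℝ) (G : Fam) : Fam := fun s t x y z => c s * G s t x y z
def mulXb (xbar : ℝ) (G : Fam) : Fam := fun s t x y z => (x - xbar) * G s t x y z
def mulYb (ybar : ℝ) (G : Fam) : Fam := fun s t x y z => (y - ybar) * G s t x y z
def mulT (G : Fam) : Fam := fun s t x y z => (s - t) * G s t x y z

lemma Sm.addC {G H : Fam} (hG : Sm G) (hH : Sm H) : Sm (SSF.addC G H) := hG.add hH
lemma Sm.smulC {G : Fam} (c : ℝ) (hG : Sm G) : Sm (SSF.smulC c G) := contDiff_const.mul hG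
lemma Sm.smulS {G : Fam} {c : ℝ → ℝ} (hc : ContDiff ℝ (⊤ : ℕ∞) c) (hG : Sm G) :
    Sm (SSF.smulS c G) := (hc.comp contDiff_fst).mul hG
lemma Sm.mulXb {G : Fam} (xbar : ℝ) (hG : Sm G) : Sm (SSF.mulXb xbar G) :=
  ((contDiff_fst.comp (contDiff_snd.comp contDiff_snd)).sub contDiff_const).mul hG
lemma Sm.mulYb {G : Fam} (ybar : ℝ) (hG : Sm G) : Sm (SSF.mulYb ybar G) :=
  ((contDiff_fst.comp (contDiff_snd.comp (contDiff_snd.comp contDiff_snd))).sub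
    contDiff_const).mul hG
lemma Sm.mulT {G : Fam} (hG : Sm G) : Sm (SSF.mulT G) :=
  (contDiff_fst.sub (contDiff_fst.comp contDiff_snd)).mul hG

/-! ### Leibniz rules -/

lemma DT_addC {G H : Fam} (hG : Sm G) (hH : Sm H) :
    DT (addC G H) = addC (DT G) (DT H) := by
  funext s t x y z
  exact ((hasDerivAt_sliceT hG s t x y z).add (hasDerivAt_sliceT hH s t x y z)).deriv
lemma DX_addC {G H : Fam} (hG : Sm G) (hH : Sm H) :
    DX (addC G H) = addC (DX G) (DX H) := by
  funext s t x y z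
  exact ((hasDerivAt_sliceX hG s t x y z).add (hasDerivAt_sliceX hH s t x y z)).deriv
lemma DY_addC {G H : Fam} (hG : Sm G) (hH : Sm H) :
    DY (addC G H) = addC (DY G) (DY H) := by
  funext s t x y z
  exact ((hasDerivAt_sliceY hG s t x y z).add (hasDerivAt_sliceY hH s t x y z)).deriv
lemma DZ_addC {G H : Fam} (hG : Sm G) (hH : Sm H) :
    DZ (addC G H) = addC (DZ G) (DZ H) := by
  funext s t x y z
  exact ((hasDerivAt_sliceZ hG s t x y z).add (hasDerivAt_sliceZ hH s t x y z)).deriv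

lemma DT_smulC {G : Fam} (c : ℝ) (hG : Sm G) : DT (smulC c G) = smulC c (DT G) := by
  funext s t x y z; exact ((hasDerivAt_sliceT hG s t x y z).const_mul c).deriv
lemma DX_smulC {G : Fam} (c : ℝ) (hG : Sm G) : DX (smulC c G) = smulC c (DX G) := by
  funext s t x y z; exact ((hasDerivAt_sliceX hG s t x y z).const_mul c).deriv
lemma DY_smulC {G : Fam} (c : ℝ) (hG : Sm G) : DY (smulC c G) = smulC c (DY G) := by
  funext s t x y z; exact ((hasDerivAt_sliceY hG s t x y z).const_mul c).deriv
lemma DZ_smulC {G : Fam} (c : ℝ) (hG : Sm G) : DZ (smulC c G) = smulC c (DZ G) := by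
  funext s t x y z; exact ((hasDerivAt_sliceZ hG s t x y z).const_mul c).deriv

lemma DT_smulS {G : Fam} (c : ℝ → ℝ) (hG : Sm G) : DT (smulS c G) = smulS c (DT G) := by
  funext s t x y z; exact ((hasDerivAt_sliceT hG s t x y z).const_mul (c s)).deriv
lemma DX_smulS {G : Fam} (c : ℝ → ℝ) (hG : Sm G) : DX (smulS c G) = smulS c (DX G) := by
  funext s t x y z; exact ((hasDerivAt_sliceX hG s t x y z).const_mul (c s)).deriv
lemma DY_smulS {G : Fam} (c : ℝ → ℝ) (hG : Sm G) : DY (smulS c G) = smulS c (DY G) := by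
  funext s t x y z; exact ((hasDerivAt_sliceY hG s t x y z).const_mul (c s)).deriv
lemma DZ_smulS {G : Fam} (c : ℝ → ℝ) (hG : Sm G) : DZ (smulS c G) = smulS c (DZ G) := by
  funext s t x y z; exact ((hasDerivAt_sliceZ hG s t x y z).const_mul (c s)).deriv

lemma DT_mulXb {G : Fam} (xbar : ℝ) (hG : Sm G) :
    DT (mulXb xbar G) = mulXb xbar (DT G) := by
  funext s t x y z; exact ((hasDerivAt_sliceT hG s t x y z).const_mul (x - xbar)).deriv
lemma DY_mulXb {G : Fam} (xbar : ℝ) (hG : Sm G) :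
    DY (mulXb xbar G) = mulXb xbar (DY G) := by
  funext s t x y z; exact ((hasDerivAt_sliceY hG s t x y z).const_mul (x - xbar)).deriv
lemma DZ_mulXb {G : Fam} (xbar : ℝ) (hG : Sm G) :
    DZ (mulXb xbar G) = mulXb xbar (DZ G) := by
  funext s t x y z; exact ((hasDerivAt_sliceZ hG s t x y z).const_mul (x - xbar)).deriv
lemma DX_mulXb {G : Fam} (xbar : ℝ) (hG : Sm G) :
    DX (mulXb xbar G) = addC G (mulXb xbar (DX G)) := by
  funext s t x y z
  have h := (((hasDerivAt_id x).sub_const xbar).mul (hasDerivAt_sliceX hG s t x y z)).deriv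
  simp only [id_eq, Pi.mul_def] at h
  rw [show DX (mulXb xbar G) s t x y z
      = deriv (fun u => (u - xbar) * G s t u y z) x from rfl, h]
  show 1 * G s t x y z + (x - xbar) * DX G s t x y z = _
  rw [one_mul]; rfl

lemma DT_mulYb {G : Fam} (ybar : ℝ) (hG : Sm G) :
    DT (mulYb ybar G) = mulYb ybar (DT G) := by
  funext s t x y z; exact ((hasDerivAt_sliceT hG s t x y z).const_mul (y - ybar)).deriv
lemma DX_mulYb {G : Fam} (ybar : ℝ) (hG : Sm G) :
    DX (mulYb ybar G) = mulYb ybar (DX G) := by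
  funext s t x y z; exact ((hasDerivAt_sliceX hG s t x y z).const_mul (y - ybar)).deriv
lemma DZ_mulYb {G : Fam} (ybar : ℝ) (hG : Sm G) :
    DZ (mulYb ybar G) = mulYb ybar (DZ G) := by
  funext s t x y z; exact ((hasDerivAt_sliceZ hG s t x y z).const_mul (y - ybar)).deriv
lemma DY_mulYb {G : Fam} (ybar : ℝ) (hG : Sm G) :
    DY (mulYb ybar G) = addC G (mulYb ybar (DY G)) := by
  funext s t x y z
  have h := (((hasDerivAt_id y).sub_const ybar).mul (hasDerivAt_sliceY hG s t x y z)).deriv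
  simp only [id_eq, Pi.mul_def] at h
  rw [show DY (mulYb ybar G) s t x y z
      = deriv (fun u => (u - ybar) * G s t x u z) y from rfl, h]
  show 1 * G s t x y z + (y - ybar) * DY G s t x y z = _
  rw [one_mul]; rfl

lemma DX_mulT {G : Fam} (hG : Sm G) : DX (mulT G) = mulT (DX G) := by
  funext s t x y z; exact ((hasDerivAt_sliceX hG s t x y z).const_mul (s - t)).deriv
lemma DY_mulT {G : Fam} (hG : Sm G) : DY (mulT G) = mulT (DY G) := by
  funext s t x y z; exact ((hasDerivAt_sliceY hG s t x y z).const_mul (s - t)).deriv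
lemma DZ_mulT {G : Fam} (hG : Sm G) : DZ (mulT G) = mulT (DZ G) := by
  funext s t x y z; exact ((hasDerivAt_sliceZ hG s t x y z).const_mul (s - t)).deriv
lemma DT_mulT {G : Fam} (hG : Sm G) :
    DT (mulT G) = addC (smulC (-1) G) (mulT (DT G)) := by
  funext s t x y z
  have h := (((hasDerivAt_id t).const_sub s).mul (hasDerivAt_sliceT hG s t x y z)).deriv
  simp only [id_eq, Pi.mul_def] at h
  rw [show DT (mulT G) s t x y z
      = deriv (fun u => (s - u) * G s u x y z) t from rfl, h]
  show -1 * G s t x y z + (s - t) * DT G s t x y z = _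
  rfl

/-! ### The concrete operators, family versions -/

section ops

def LXC (σ0 β0 μ0 ρ : ℝ) (G : Fam) : Fam :=
  addC (addC (addC (smulC (μ0 - σ0^2/2) G) (smulC (σ0^2) (DX G)))
    (smulC (ρ*σ0*β0) (DY G))) (smulC μ0 (DZ G))
def LYC (σ0 β0 c0 lam0 ρ : ℝ) (G : Fam) : Fam :=
  addC (addC (addC (smulC c0 G) (smulC (β0^2) (DY G)))
    (smulC (ρ*σ0*β0) (DX G))) (smulC (ρ*β0*lam0) (DZ G))
def MXC (σ0 β0 μ0 ρ xbar : ℝ) (G : Fam) : Fam := addC (mulXb xbar G) (mulT (LXC σ0 β0 μ0 ρ G))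
def MYC (σ0 β0 c0 lam0 ρ ybar : ℝ) (G : Fam) : Fam := addC (mulYb ybar G) (mulT (LYC σ0 β0 c0 lam0 ρ G))
def HC (σ0 β0 b0 c0 lam0 ρ μ0 : ℝ) (G : Fam) : Fam := fun s => Hop σ0 β0 b0 c0 lam0 ρ μ0 (G s)

lemma LXC_apply (σ0 β0 μ0 ρ : ℝ) (G : Fam) (s : ℝ) : LXC σ0 β0 μ0 ρ G s = LXop σ0 β0 μ0 ρ (G s) := rfl
lemma LYC_apply (σ0 β0 c0 lam0 ρ : ℝ) (G : Fam) (s : ℝ) : LYC σ0 β0 c0 lam0 ρ G s = LYop σ0 β0 c0 lam0 ρ (G s) := rfl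
lemma MXC_apply (σ0 β0 μ0 ρ xbar : ℝ) (G : Fam) (s : ℝ) :
    MXC σ0 β0 μ0 ρ xbar G s = MXop σ0 β0 μ0 ρ xbar s (G s) := rfl
lemma MYC_apply (σ0 β0 c0 lam0 ρ ybar : ℝ) (G : Fam) (s : ℝ) :
    MYC σ0 β0 c0 lam0 ρ ybar G s = MYop σ0 β0 c0 lam0 ρ ybar s (G s) := rfl

lemma HC_expand (σ0 β0 b0 c0 lam0 ρ μ0 : ℝ) (G : Fam) : HC σ0 β0 b0 c0 lam0 ρ μ0 G =
    addC (addC (addC (addC (addC (addC (addC (addC (DT G)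
      (smulC (1/2*σ0^2) (DX (DX G)))) (smulC (ρ*σ0*β0) (DX (DY G))))
      (smulC (1/2*β0^2) (DY (DY G)))) (smulC b0 (DX G))) (smulC c0 (DY G)))
      (smulC (1/2*lam0^2) (DZ (DZ G)))) (smulC (ρ*β0*lam0) (DY (DZ G))))
      (smulC μ0 (DX (DZ G))) := by
  funext s t x y z
  simp only [HC, Hop, addC, smulC, DT, DX, DY, DZ]

lemma Sm.lxc (σ0 β0 μ0 ρ : ℝ) {G : Fam} (hG : Sm G) : Sm (LXC σ0 β0 μ0 ρ G) :=
  Sm.addC (Sm.addC (Sm.addC (Sm.smulC _ hG) (Sm.smulC _ hG.dX)) (Sm.smulC _ hG.dY))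
    (Sm.smulC _ hG.dZ)
lemma Sm.lyc (σ0 β0 c0 lam0 ρ : ℝ) {G : Fam} (hG : Sm G) : Sm (LYC σ0 β0 c0 lam0 ρ G) :=
  Sm.addC (Sm.addC (Sm.addC (Sm.smulC _ hG) (Sm.smulC _ hG.dY)) (Sm.smulC _ hG.dX))
    (Sm.smulC _ hG.dZ)
lemma Sm.mxc (σ0 β0 μ0 ρ xbar : ℝ) {G : Fam} (hG : Sm G) : Sm (MXC σ0 β0 μ0 ρ xbar G) :=
  Sm.addC (Sm.mulXb _ hG) (Sm.mulT (Sm.lxc σ0 β0 μ0 ρ hG))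
lemma Sm.myc (σ0 β0 c0 lam0 ρ ybar : ℝ) {G : Fam} (hG : Sm G) : Sm (MYC σ0 β0 c0 lam0 ρ ybar G) :=
  Sm.addC (Sm.mulYb _ hG) (Sm.mulT (Sm.lyc σ0 β0 c0 lam0 ρ hG))

lemma HC_addC (σ0 β0 b0 c0 lam0 ρ μ0 : ℝ) {G H : Fam} (hG : Sm G) (hH : Sm H) :
    HC σ0 β0 b0 c0 lam0 ρ μ0 (addC G H)
      = addC (HC σ0 β0 b0 c0 lam0 ρ μ0 G) (HC σ0 β0 b0 c0 lam0 ρ μ0 H) := by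
  simp only [HC_expand]
  simp (config := { maxDischargeDepth := 100 }) only [DT_addC, DX_addC, DY_addC, DZ_addC, DT_smulC, DX_smulC, DY_smulC, DZ_smulC,
    Sm.addC, Sm.smulC, Sm.dT, Sm.dX, Sm.dY, Sm.dZ, hG, hH]
  funext s t x y z
  simp only [addC, smulC]
  ring

lemma HC_mulXb (σ0 β0 b0 c0 lam0 ρ μ0 xbar : ℝ) {G : Fam} (hb0 : b0 = μ0 - σ0^2/2) (hG : Sm G) :
    HC σ0 β0 b0 c0 lam0 ρ μ0 (mulXb xbar G)
      = addC (mulXb xbar (HC σ0 β0 b0 c0 lam0 ρ μ0 G)) (LXC σ0 β0 μ0 ρ G) := by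
  subst hb0
  simp only [HC_expand, LXC]
  simp (config := { maxDischargeDepth := 100 }) only [DT_addC, DX_addC, DY_addC, DZ_addC, DT_smulC, DX_smulC, DY_smulC, DZ_smulC,
    DT_mulXb, DX_mulXb, DY_mulXb, DZ_mulXb,
    Sm.addC, Sm.smulC, Sm.mulXb, Sm.dT, Sm.dX, Sm.dY, Sm.dZ, hG]
  funext s t x y z
  simp only [addC, smulC, mulXb]
  ring

lemma HC_mulYb (σ0 β0 b0 c0 lam0 ρ μ0 ybar : ℝ) {G : Fam} (hG : Sm G) :
    HC σ0 β0 b0 c0 lam0 ρ μ0 (mulYb ybar G)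
      = addC (mulYb ybar (HC σ0 β0 b0 c0 lam0 ρ μ0 G)) (LYC σ0 β0 c0 lam0 ρ G) := by
  simp only [HC_expand, LYC]
  simp (config := { maxDischargeDepth := 100 }) only [DT_addC, DX_addC, DY_addC, DZ_addC,
    DT_smulC, DX_smulC, DY_smulC, DZ_smulC,
    DT_mulYb, DX_mulYb, DY_mulYb, DZ_mulYb,
    Sm.addC, Sm.smulC, Sm.mulYb, Sm.dT, Sm.dX, Sm.dY, Sm.dZ, hG]
  funext s t x y z
  simp only [addC, smulC, mulYb]
  ring

lemma HC_mulT (σ0 β0 b0 c0 lam0 ρ μ0 : ℝ) {G : Fam} (hG : Sm G) :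
    HC σ0 β0 b0 c0 lam0 ρ μ0 (mulT G)
      = addC (smulC (-1) G) (mulT (HC σ0 β0 b0 c0 lam0 ρ μ0 G)) := by
  simp only [HC_expand]
  simp (config := { maxDischargeDepth := 100 }) only [DT_addC, DX_addC, DY_addC, DZ_addC,
    DT_smulC, DX_smulC, DY_smulC, DZ_smulC,
    DT_mulT, DX_mulT, DY_mulT, DZ_mulT,
    Sm.addC, Sm.smulC, Sm.mulT, Sm.dT, Sm.dX, Sm.dY, Sm.dZ, hG]
  funext s t x y z
  simp only [addC, smulC, mulT]
  ring

lemma HC_smulS (σ0 β0 b0 c0 lam0 ρ μ0 : ℝ) {G : Fam} {c : ℝ → ℝ} (hc : ContDiff ℝ (⊤ : ℕ∞) c) (hG : Sm G) :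
    HC σ0 β0 b0 c0 lam0 ρ μ0 (smulS c G)
      = smulS c (HC σ0 β0 b0 c0 lam0 ρ μ0 G) := by
  simp only [HC_expand]
  simp (config := { maxDischargeDepth := 100 }) only [DT_smulS, DX_smulS, DY_smulS, DZ_smulS,
    Sm.smulS, Sm.dT, Sm.dX, Sm.dY, Sm.dZ, hc, hG]
  funext s t x y z
  simp only [addC, smulC, smulS]
  ring

lemma HC_LXC (σ0 β0 b0 c0 lam0 ρ μ0 : ℝ) {G : Fam} (hG : Sm G) :
    HC σ0 β0 b0 c0 lam0 ρ μ0 (LXC σ0 β0 μ0 ρ G)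
      = LXC σ0 β0 μ0 ρ (HC σ0 β0 b0 c0 lam0 ρ μ0 G) := by
  simp only [HC_expand, LXC]
  simp (config := { maxDischargeDepth := 100 }) only [DT_addC, DX_addC, DY_addC, DZ_addC,
    DT_smulC, DX_smulC, DY_smulC, DZ_smulC,
    DX_DT, DY_DT, DZ_DT, DY_DX, DZ_DX, DZ_DY,
    Sm.addC, Sm.smulC, Sm.dT, Sm.dX, Sm.dY, Sm.dZ, hG]
  funext s t x y z
  simp only [addC, smulC]
  ring

lemma HC_LYC (σ0 β0 b0 c0 lam0 ρ μ0 : ℝ) {G : Fam} (hG : Sm G) :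
    HC σ0 β0 b0 c0 lam0 ρ μ0 (LYC σ0 β0 c0 lam0 ρ G)
      = LYC σ0 β0 c0 lam0 ρ (HC σ0 β0 b0 c0 lam0 ρ μ0 G) := by
  simp only [HC_expand, LYC]
  simp (config := { maxDischargeDepth := 100 }) only [DT_addC, DX_addC, DY_addC, DZ_addC,
    DT_smulC, DX_smulC, DY_smulC, DZ_smulC,
    DX_DT, DY_DT, DZ_DT, DY_DX, DZ_DX, DZ_DY,
    Sm.addC, Sm.smulC, Sm.dT, Sm.dX, Sm.dY, Sm.dZ, hG]
  funext s t x y z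
  simp only [addC, smulC]
  ring

lemma HC_MXC (σ0 β0 b0 c0 lam0 ρ μ0 xbar : ℝ) {G : Fam} (hb0 : b0 = μ0 - σ0^2/2) (hG : Sm G) :
    HC σ0 β0 b0 c0 lam0 ρ μ0 (MXC σ0 β0 μ0 ρ xbar G)
      = MXC σ0 β0 μ0 ρ xbar (HC σ0 β0 b0 c0 lam0 ρ μ0 G) := by
  rw [show MXC σ0 β0 μ0 ρ xbar G = addC (mulXb xbar G) (mulT (LXC σ0 β0 μ0 ρ G)) from rfl,
    HC_addC σ0 β0 b0 c0 lam0 ρ μ0 (Sm.mulXb _ hG) (Sm.mulT (Sm.lxc σ0 β0 μ0 ρ hG)),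
    HC_mulXb σ0 β0 b0 c0 lam0 ρ μ0 xbar hb0 hG,
    HC_mulT σ0 β0 b0 c0 lam0 ρ μ0 (Sm.lxc σ0 β0 μ0 ρ hG),
    HC_LXC σ0 β0 b0 c0 lam0 ρ μ0 hG]
  funext s t x y z
  simp only [MXC, LXC, addC, smulC, mulXb, mulT]
  ring

lemma HC_MYC (σ0 β0 b0 c0 lam0 ρ μ0 ybar : ℝ) {G : Fam} (hG : Sm G) :
    HC σ0 β0 b0 c0 lam0 ρ μ0 (MYC σ0 β0 c0 lam0 ρ ybar G)
      = MYC σ0 β0 c0 lam0 ρ ybar (HC σ0 β0 b0 c0 lam0 ρ μ0 G) := by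
  rw [show MYC σ0 β0 c0 lam0 ρ ybar G = addC (mulYb ybar G) (mulT (LYC σ0 β0 c0 lam0 ρ G))
      from rfl,
    HC_addC σ0 β0 b0 c0 lam0 ρ μ0 (Sm.mulYb _ hG) (Sm.mulT (Sm.lyc σ0 β0 c0 lam0 ρ hG)),
    HC_mulYb σ0 β0 b0 c0 lam0 ρ μ0 ybar hG,
    HC_mulT σ0 β0 b0 c0 lam0 ρ μ0 (Sm.lyc σ0 β0 c0 lam0 ρ hG),
    HC_LYC σ0 β0 b0 c0 lam0 ρ μ0 hG]
  funext s t x y z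
  simp only [MYC, LYC, addC, smulC, mulYb, mulT]
  ring

/-- zero family -/
def zeroC : Fam := fun _ _ _ _ _ => 0

lemma DT_zeroC : DT zeroC = zeroC := by
  funext s t x y z; exact deriv_const t 0
lemma DX_zeroC : DX zeroC = zeroC := by
  funext s t x y z; exact deriv_const x 0
lemma DY_zeroC : DY zeroC = zeroC := by
  funext s t x y z; exact deriv_const y 0
lemma DZ_zeroC : DZ zeroC = zeroC := by
  funext s t x y z; exact deriv_const z 0

lemma MXC_zeroC (σ0 β0 μ0 ρ xbar : ℝ) : MXC σ0 β0 μ0 ρ xbar zeroC = zeroC := by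
  simp only [MXC, LXC, DX_zeroC, DY_zeroC, DZ_zeroC]
  funext s t x y z
  simp [addC, smulC, mulXb, mulT, zeroC]

lemma MYC_zeroC (σ0 β0 c0 lam0 ρ ybar : ℝ) : MYC σ0 β0 c0 lam0 ρ ybar zeroC = zeroC := by
  simp only [MYC, LYC, DX_zeroC, DY_zeroC, DZ_zeroC]
  funext s t x y z
  simp [addC, smulC, mulYb, mulT, zeroC]

lemma HC_MXC_zero (σ0 β0 b0 c0 lam0 ρ μ0 xbar : ℝ) {G : Fam} (hb0 : b0 = μ0 - σ0^2/2) (hG : Sm G)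
    (h0 : HC σ0 β0 b0 c0 lam0 ρ μ0 G = zeroC) :
    HC σ0 β0 b0 c0 lam0 ρ μ0 (MXC σ0 β0 μ0 ρ xbar G) = zeroC := by
  rw [HC_MXC σ0 β0 b0 c0 lam0 ρ μ0 xbar hb0 hG, h0, MXC_zeroC]

lemma HC_MYC_zero (σ0 β0 b0 c0 lam0 ρ μ0 ybar : ℝ) {G : Fam} (hG : Sm G)
    (h0 : HC σ0 β0 b0 c0 lam0 ρ μ0 G = zeroC) :
    HC σ0 β0 b0 c0 lam0 ρ μ0 (MYC σ0 β0 c0 lam0 ρ ybar G) = zeroC := by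
  rw [HC_MYC σ0 β0 b0 c0 lam0 ρ μ0 ybar hG, h0, MYC_zeroC]

/-! ### Iterates -/

lemma Sm.mxc_iter (σ0 β0 μ0 ρ xbar : ℝ) {G : Fam} (hG : Sm G) (k : ℕ) : Sm ((MXC σ0 β0 μ0 ρ xbar)^[k] G) := by
  induction k with
  | zero => exact hG
  | succ k ih => rw [Function.iterate_succ_apply']; exact Sm.mxc σ0 β0 μ0 ρ xbar ih

lemma Sm.myc_iter (σ0 β0 c0 lam0 ρ ybar : ℝ) {G : Fam} (hG : Sm G) (l : ℕ) : Sm ((MYC σ0 β0 c0 lam0 ρ ybar)^[l] G) := by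
  induction l with
  | zero => exact hG
  | succ l ih => rw [Function.iterate_succ_apply']; exact Sm.myc σ0 β0 c0 lam0 ρ ybar ih

lemma HC_mxc_iter_zero (σ0 β0 b0 c0 lam0 ρ μ0 xbar : ℝ) {G : Fam} (hb0 : b0 = μ0 - σ0^2/2) (hG : Sm G)
    (h0 : HC σ0 β0 b0 c0 lam0 ρ μ0 G = zeroC) (k : ℕ) :
    HC σ0 β0 b0 c0 lam0 ρ μ0 ((MXC σ0 β0 μ0 ρ xbar)^[k] G) = zeroC := by
  induction k with
  | zero => exact h0
  | succ k ih =>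
      rw [Function.iterate_succ_apply']
      exact HC_MXC_zero σ0 β0 b0 c0 lam0 ρ μ0 xbar hb0 (Sm.mxc_iter σ0 β0 μ0 ρ xbar hG k) ih

lemma HC_myc_iter_zero (σ0 β0 b0 c0 lam0 ρ μ0 ybar : ℝ) {G : Fam} (hG : Sm G)
    (h0 : HC σ0 β0 b0 c0 lam0 ρ μ0 G = zeroC) (l : ℕ) :
    HC σ0 β0 b0 c0 lam0 ρ μ0 ((MYC σ0 β0 c0 lam0 ρ ybar)^[l] G) = zeroC := by
  induction l with
  | zero => exact h0
  | succ l ih =>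
      rw [Function.iterate_succ_apply']
      exact HC_MYC_zero σ0 β0 b0 c0 lam0 ρ μ0 ybar (Sm.myc_iter σ0 β0 c0 lam0 ρ ybar hG l) ih

/-- family iterate vs pointwise iterate -/
lemma MXC_iter_apply (σ0 β0 μ0 ρ xbar : ℝ) (G : Fam) (k : ℕ) (s : ℝ) :
    (MXC σ0 β0 μ0 ρ xbar)^[k] G s = (MXop σ0 β0 μ0 ρ xbar s)^[k] (G s) := by
  induction k with
  | zero => rfl
  | succ k ih =>
      rw [Function.iterate_succ_apply', Function.iterate_succ_apply',
        MXC_apply σ0 β0 μ0 ρ xbar, ih]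

lemma MYC_iter_apply (σ0 β0 c0 lam0 ρ ybar : ℝ) (G : Fam) (l : ℕ) (s : ℝ) :
    (MYC σ0 β0 c0 lam0 ρ ybar)^[l] G s = (MYop σ0 β0 c0 lam0 ρ ybar s)^[l] (G s) := by
  induction l with
  | zero => rfl
  | succ l ih =>
      rw [Function.iterate_succ_apply', Function.iterate_succ_apply',
        MYC_apply σ0 β0 c0 lam0 ρ ybar, ih]

/-! ### Evaluation at `t = s` -/

lemma MXop_iter_eval (σ0 β0 μ0 ρ xbar : ℝ) (s x y z : ℝ) (F : R4) (k : ℕ) :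
    ((MXop σ0 β0 μ0 ρ xbar s)^[k] F) s x y z = (x - xbar)^k * F s x y z := by
  induction k with
  | zero => simp
  | succ k ih =>
      rw [Function.iterate_succ_apply']
      show (x - xbar) * ((MXop σ0 β0 μ0 ρ xbar s)^[k] F) s x y z + (s - s) * _ = _
      rw [ih, sub_self, zero_mul, add_zero, pow_succ]
      ring

lemma MYop_iter_eval (σ0 β0 c0 lam0 ρ ybar : ℝ) (s x y z : ℝ) (F : R4) (l : ℕ) :
    ((MYop σ0 β0 c0 lam0 ρ ybar s)^[l] F) s x y z = (y - ybar)^l * F s x y z := by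
  induction l with
  | zero => simp
  | succ l ih =>
      rw [Function.iterate_succ_apply']
      show (y - ybar) * ((MYop σ0 β0 c0 lam0 ρ ybar s)^[l] F) s x y z + (s - s) * _ = _
      rw [ih, sub_self, zero_mul, add_zero, pow_succ]
      ring

end ops

/-! ### Integral machinery -/

section integral

lemma Sm.cont_s {W : Fam} (hW : Sm W) (t x y z : ℝ) :
    Continuous fun s => W s t x y z := by
  have h : Continuous fun s : ℝ => ((s, t, x, y, z) : P5) := by fun_prop
  exact hW.continuous.comp h

lemma Sm.cont_st {W : Fam} (hW : Sm W) (x y z : ℝ) :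
    Continuous fun p : ℝ × ℝ => W p.1 p.2 x y z := by
  have h : Continuous fun p : ℝ × ℝ => ((p.1, p.2, x, y, z) : P5) := by fun_prop
  exact hW.continuous.comp h

lemma Sm.cont_sx {W : Fam} (hW : Sm W) (t y z : ℝ) :
    Continuous fun p : ℝ × ℝ => W p.1 t p.2 y z := by
  have h : Continuous fun p : ℝ × ℝ => ((p.1, t, p.2, y, z) : P5) := by fun_prop
  exact hW.continuous.comp h

lemma Sm.cont_sy {W : Fam} (hW : Sm W) (t x z : ℝ) :
    Continuous fun p : ℝ × ℝ => W p.1 t x p.2 z := by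
  have h : Continuous fun p : ℝ × ℝ => ((p.1, t, x, p.2, z) : P5) := by fun_prop
  exact hW.continuous.comp h

lemma Sm.cont_sz {W : Fam} (hW : Sm W) (t x y : ℝ) :
    Continuous fun p : ℝ × ℝ => W p.1 t x y p.2 := by
  have h : Continuous fun p : ℝ × ℝ => ((p.1, t, x, y, p.2) : P5) := by fun_prop
  exact hW.continuous.comp h

lemma Sm.intInt {W : Fam} (hW : Sm W) (t x y z a b : ℝ) :
    IntervalIntegrable (fun s => W s t x y z) volume a b :=
  (hW.cont_s t x y z).intervalIntegrable a b

/-- Differentiation under the interval integral, continuous version. -/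
lemma param_hasDerivAt {φ φ' : ℝ → ℝ → ℝ} (a b u0 : ℝ)
    (hc : Continuous fun p : ℝ × ℝ => φ p.1 p.2)
    (hc' : Continuous fun p : ℝ × ℝ => φ' p.1 p.2)
    (hd : ∀ s u, HasDerivAt (fun v => φ s v) (φ' s u) u) :
    HasDerivAt (fun u => ∫ s in a..b, φ s u) (∫ s in a..b, φ' s u0) u0 := by
  obtain ⟨C, hC⟩ : ∃ C, ∀ p ∈ Set.uIcc a b ×ˢ Metric.closedBall u0 1,
      ‖φ' p.1 p.2‖ ≤ C :=
    (isCompact_uIcc.prod (isCompact_closedBall u0 1)).exists_bound_of_continuousOn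
      hc'.continuousOn
  have hFc : ∀ u : ℝ, Continuous fun s => φ s u :=
    fun u => hc.comp (continuous_id.prodMk continuous_const)
  have hF'c : ∀ u : ℝ, Continuous fun s => φ' s u :=
    fun u => hc'.comp (continuous_id.prodMk continuous_const)
  have key := intervalIntegral.hasDerivAt_integral_of_dominated_loc_of_deriv_le
    (μ := volume) (F := fun u s => φ s u) (F' := fun u s => φ' s u) (a := a) (b := b)
    (x₀ := u0) (bound := fun _ => C) (Metric.ball_mem_nhds u0 one_pos)
    (Filter.Eventually.of_forall fun u => (hFc u).aestronglyMeasurable)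
    ((hFc u0).intervalIntegrable a b)
    (hF'c u0).aestronglyMeasurable
    (Filter.Eventually.of_forall fun s hs u hu =>
      hC (s, u) ⟨Set.uIoc_subset_uIcc hs, Metric.ball_subset_closedBall hu⟩)
    intervalIntegrable_const
    (Filter.Eventually.of_forall fun s _ u _ => hd s u)
  exact key.2

def intW (T : ℝ) (W : Fam) : R4 := fun t x y z => ∫ s in t..T, W s t x y z

lemma d4X_intW (T : ℝ) {W : Fam} (hW : Sm W) : d4X (intW T W) = intW T (DX W) := by
  funext t x y z
  exact (param_hasDerivAt t T x (hW.cont_sx t y z) (Sm.cont_sx hW.dX t y z)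
    (fun s u => hasDerivAt_sliceX hW s t u y z)).deriv

lemma d4Y_intW (T : ℝ) {W : Fam} (hW : Sm W) : d4Y (intW T W) = intW T (DY W) := by
  funext t x y z
  exact (param_hasDerivAt t T y (hW.cont_sy t x z) (Sm.cont_sy hW.dY t x z)
    (fun s u => hasDerivAt_sliceY hW s t x u z)).deriv

lemma d4Z_intW (T : ℝ) {W : Fam} (hW : Sm W) : d4Z (intW T W) = intW T (DZ W) := by
  funext t x y z
  exact (param_hasDerivAt t T z (hW.cont_sz t x y) (Sm.cont_sz hW.dZ t x y)
    (fun s u => hasDerivAt_sliceZ hW s t x y u)).deriv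

lemma left_endpoint_hasDerivAt {W : Fam} (hW : Sm W) (t x y z : ℝ) :
    HasDerivAt (fun τ => ∫ s in t..τ, W s τ x y z) (W t t x y z) t := by
  rw [hasDerivAt_iff_isLittleO, Asymptotics.isLittleO_iff]
  intro C hC
  have hcont : ContinuousAt (fun p : ℝ × ℝ => W p.1 p.2 x y z) (t, t) :=
    (hW.cont_st x y z).continuousAt
  rw [Metric.continuousAt_iff] at hcont
  obtain ⟨δ, hδ, hball⟩ := hcont C hC
  filter_upwards [Metric.ball_mem_nhds t hδ] with τ hτ
  rw [Metric.mem_ball] at hτ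
  have h1 : (∫ s in t..τ, W s τ x y z) - (∫ s in t..t, W s t x y z) - (τ - t) • W t t x y z
      = ∫ s in t..τ, (W s τ x y z - W t t x y z) := by
    rw [intervalIntegral.integral_same, sub_zero,
      intervalIntegral.integral_sub (hW.intInt τ x y z t τ) intervalIntegrable_const,
      intervalIntegral.integral_const]
  rw [h1]
  have h2 : ∀ s ∈ Set.uIoc t τ, ‖W s τ x y z - W t t x y z‖ ≤ C := by
    intro s hs
    have hds : dist s t ≤ dist τ t := by
      rw [Real.dist_eq, Real.dist_eq]
      rcases le_total t τ with h | h
      · rw [Set.uIoc_of_le h] at hs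
        rw [abs_of_nonneg (by linarith [hs.1]), abs_of_nonneg (by linarith)]
        linarith [hs.2]
      · rw [Set.uIoc_of_ge h] at hs
        rw [abs_of_nonpos (by linarith [hs.2]), abs_of_nonpos (by linarith)]
        linarith [hs.1]
    have hd2 : dist (s, τ) (t, t) < δ := by
      rw [Prod.dist_eq]
      exact max_lt (lt_of_le_of_lt hds hτ) hτ
    have := hball hd2
    rw [Real.dist_eq] at this
    exact le_of_lt this
  calc ‖∫ s in t..τ, (W s τ x y z - W t t x y z)‖ ≤ C * |τ - t| :=
        intervalIntegral.norm_integral_le_of_norm_le_const h2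
    _ ≤ C * ‖τ - t‖ := by rw [Real.norm_eq_abs]

lemma d4T_intW (T : ℝ) {W : Fam} (hW : Sm W) (t x y z : ℝ) :
    d4T (intW T W) t x y z = -(W t t x y z) + ∫ s in t..T, DT W s t x y z := by
  have hu3 : HasDerivAt (fun τ => ∫ s in t..T, W s τ x y z)
      (∫ s in t..T, DT W s t x y z) t :=
    param_hasDerivAt t T t (hW.cont_st x y z) (Sm.cont_st hW.dT x y z)
      (fun s u => hasDerivAt_sliceT hW s u x y z)
  have hr := left_endpoint_hasDerivAt hW t x y z
  have heq : (fun τ => ∫ s in τ..T, W s τ x y z)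
      = fun τ => (∫ s in t..T, W s τ x y z) - ∫ s in t..τ, W s τ x y z := by
    funext τ
    rw [intervalIntegral.integral_interval_sub_left (hW.intInt τ x y z t T)
      (hW.intInt τ x y z t τ)]
  show deriv (fun τ => ∫ s in τ..T, W s τ x y z) t = _
  rw [heq]; refine ((hu3.sub hr).deriv).trans ?_
  ring

end integral

/-! ### Assembly: `Hop` applied to `intW` -/

lemma HC_apply_pt (σ0 β0 b0 c0 lam0 ρ μ0 : ℝ) (W : Fam) (s t x y z : ℝ) :
    HC σ0 β0 b0 c0 lam0 ρ μ0 W s t x y z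
      = DT W s t x y z
        + 1/2 * σ0^2 * DX (DX W) s t x y z
        + ρ * σ0 * β0 * DX (DY W) s t x y z
        + 1/2 * β0^2 * DY (DY W) s t x y z
        + b0 * DX W s t x y z
        + c0 * DY W s t x y z
        + 1/2 * lam0^2 * DZ (DZ W) s t x y z
        + ρ * β0 * lam0 * DY (DZ W) s t x y z
        + μ0 * DX (DZ W) s t x y z := rfl

lemma Hop_intW (σ0 β0 b0 c0 lam0 ρ μ0 T : ℝ) {W : Fam} (hW : Sm W)
    (h0 : HC σ0 β0 b0 c0 lam0 ρ μ0 W = zeroC) (t x y z : ℝ) :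
    Hop σ0 β0 b0 c0 lam0 ρ μ0 (intW T W) t x y z = -(W t t x y z) := by
  have i1 := Sm.intInt hW.dT t x y z t T
  have i2 := Sm.intInt hW.dX.dX t x y z t T
  have i3 := Sm.intInt hW.dY.dX t x y z t T
  have i4 := Sm.intInt hW.dY.dY t x y z t T
  have i5 := Sm.intInt hW.dX t x y z t T
  have i6 := Sm.intInt hW.dY t x y z t T
  have i7 := Sm.intInt hW.dZ.dZ t x y z t T
  have i8 := Sm.intInt hW.dZ.dY t x y z t T
  have i9 := Sm.intInt hW.dZ.dX t x y z t T
  have h9 : ∀ s, DT W s t x y z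
        + 1/2 * σ0^2 * DX (DX W) s t x y z
        + ρ * σ0 * β0 * DX (DY W) s t x y z
        + 1/2 * β0^2 * DY (DY W) s t x y z
        + b0 * DX W s t x y z
        + c0 * DY W s t x y z
        + 1/2 * lam0^2 * DZ (DZ W) s t x y z
        + ρ * β0 * lam0 * DY (DZ W) s t x y z
        + μ0 * DX (DZ W) s t x y z = 0 := by
    intro s
    rw [← HC_apply_pt σ0 β0 b0 c0 lam0 ρ μ0 W s t x y z, h0]
    rfl
  have key : (∫ s in t..T, DT W s t x y z)
      + 1/2*σ0^2 * (∫ s in t..T, DX (DX W) s t x y z)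
      + ρ*σ0*β0 * (∫ s in t..T, DX (DY W) s t x y z)
      + 1/2*β0^2 * (∫ s in t..T, DY (DY W) s t x y z)
      + b0 * (∫ s in t..T, DX W s t x y z)
      + c0 * (∫ s in t..T, DY W s t x y z)
      + 1/2*lam0^2 * (∫ s in t..T, DZ (DZ W) s t x y z)
      + ρ*β0*lam0 * (∫ s in t..T, DY (DZ W) s t x y z)
      + μ0 * (∫ s in t..T, DX (DZ W) s t x y z) = 0 := by
    have comb : ∫ s in t..T, (DT W s t x y z
        + 1/2 * σ0^2 * DX (DX W) s t x y z
        + ρ * σ0 * β0 * DX (DY W) s t x y z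
        + 1/2 * β0^2 * DY (DY W) s t x y z
        + b0 * DX W s t x y z
        + c0 * DY W s t x y z
        + 1/2 * lam0^2 * DZ (DZ W) s t x y z
        + ρ * β0 * lam0 * DY (DZ W) s t x y z
        + μ0 * DX (DZ W) s t x y z) = 0 := by
      have : (fun s => DT W s t x y z
        + 1/2 * σ0^2 * DX (DX W) s t x y z
        + ρ * σ0 * β0 * DX (DY W) s t x y z
        + 1/2 * β0^2 * DY (DY W) s t x y z
        + b0 * DX W s t x y z
        + c0 * DY W s t x y z
        + 1/2 * lam0^2 * DZ (DZ W) s t x y z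
        + ρ * β0 * lam0 * DY (DZ W) s t x y z
        + μ0 * DX (DZ W) s t x y z) = fun _ => (0:ℝ) := funext h9
      rw [this, intervalIntegral.integral_zero]
    rw [intervalIntegral.integral_add (((((((i1.add (i2.const_mul _)).add
        (i3.const_mul _)).add (i4.const_mul _)).add (i5.const_mul _)).add
        (i6.const_mul _)).add (i7.const_mul _)).add (i8.const_mul _)) (i9.const_mul _),
      intervalIntegral.integral_add ((((((i1.add (i2.const_mul _)).add
        (i3.const_mul _)).add (i4.const_mul _)).add (i5.const_mul _)).add
        (i6.const_mul _)).add (i7.const_mul _)) (i8.const_mul _),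
      intervalIntegral.integral_add (((((i1.add (i2.const_mul _)).add
        (i3.const_mul _)).add (i4.const_mul _)).add (i5.const_mul _)).add
        (i6.const_mul _)) (i7.const_mul _),
      intervalIntegral.integral_add ((((i1.add (i2.const_mul _)).add
        (i3.const_mul _)).add (i4.const_mul _)).add (i5.const_mul _)) (i6.const_mul _),
      intervalIntegral.integral_add (((i1.add (i2.const_mul _)).add
        (i3.const_mul _)).add (i4.const_mul _)) (i5.const_mul _),
      intervalIntegral.integral_add ((i1.add (i2.const_mul _)).add
        (i3.const_mul _)) (i4.const_mul _),
      intervalIntegral.integral_add (i1.add (i2.const_mul _)) (i3.const_mul _),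
      intervalIntegral.integral_add i1 (i2.const_mul _)] at comb
    simp only [intervalIntegral.integral_const_mul] at comb
    linear_combination comb
  have eT' := d4T_intW T hW t x y z
  have eX := d4X_intW T hW
  have eY := d4Y_intW T hW
  have eZ := d4Z_intW T hW
  have eXX := d4X_intW T hW.dX
  have eXY := d4X_intW T hW.dY
  have eYY := d4Y_intW T hW.dY
  have eZZ := d4Z_intW T hW.dZ
  have eYZ := d4Y_intW T hW.dZ
  have eXZ := d4X_intW T hW.dZ
  show d4T (intW T W) t x y z
    + (1/2) * σ0^2 * d4X (d4X (intW T W)) t x y z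
    + ρ * σ0 * β0 * d4X (d4Y (intW T W)) t x y z
    + (1/2) * β0^2 * d4Y (d4Y (intW T W)) t x y z
    + b0 * d4X (intW T W) t x y z
    + c0 * d4Y (intW T W) t x y z
    + (1/2) * lam0^2 * d4Z (d4Z (intW T W)) t x y z
    + ρ * β0 * lam0 * d4Y (d4Z (intW T W)) t x y z
    + μ0 * d4X (d4Z (intW T W)) t x y z = -(W t t x y z)
  rw [eX, eY, eZ, eXX, eXY, eYY, eZZ, eYZ, eXZ, eT']
  show -(W t t x y z) + (∫ s in t..T, DT W s t x y z)
    + (1/2) * σ0^2 * (∫ s in t..T, DX (DX W) s t x y z)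
    + ρ * σ0 * β0 * (∫ s in t..T, DX (DY W) s t x y z)
    + (1/2) * β0^2 * (∫ s in t..T, DY (DY W) s t x y z)
    + b0 * (∫ s in t..T, DX W s t x y z)
    + c0 * (∫ s in t..T, DY W s t x y z)
    + (1/2) * lam0^2 * (∫ s in t..T, DZ (DZ W) s t x y z)
    + ρ * β0 * lam0 * (∫ s in t..T, DY (DZ W) s t x y z)
    + μ0 * (∫ s in t..T, DX (DZ W) s t x y z) = -(W t t x y z)
  linear_combination key

/-! ### Sums and the concrete integrand family -/

lemma HC_zeroC (σ0 β0 b0 c0 lam0 ρ μ0 : ℝ) :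
    HC σ0 β0 b0 c0 lam0 ρ μ0 zeroC = zeroC := by
  rw [HC_expand]
  simp only [DT_zeroC, DX_zeroC, DY_zeroC, DZ_zeroC]
  funext s t x y z
  simp [addC, smulC, zeroC]

lemma smulS_zeroC (c : ℝ → ℝ) : smulS c zeroC = zeroC := by
  funext s t x y z; simp [smulS, zeroC]

lemma Sm_finsum {ι : Type*} (S : Finset ι) (G : ι → Fam) (h : ∀ p ∈ S, Sm (G p)) :
    Sm (fun s t x y z => ∑ p ∈ S, G p s t x y z) := by
  have : unc (fun s t x y z => ∑ p ∈ S, G p s t x y z)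
      = fun q => ∑ p ∈ S, unc (G p) q := rfl
  rw [Sm, this]
  exact ContDiff.sum h

lemma HC_finsum (σ0 β0 b0 c0 lam0 ρ μ0 : ℝ) {ι : Type*} (S : Finset ι) (G : ι → Fam)
    (hSm : ∀ p ∈ S, Sm (G p)) (h0 : ∀ p ∈ S, HC σ0 β0 b0 c0 lam0 ρ μ0 (G p) = zeroC) :
    HC σ0 β0 b0 c0 lam0 ρ μ0 (fun s t x y z => ∑ p ∈ S, G p s t x y z) = zeroC := by
  classical
  induction S using Finset.induction_on with
  | empty =>
      have : (fun s t x y z => ∑ p ∈ (∅ : Finset ι), G p s t x y z) = zeroC := by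
        funext s t x y z; simp [zeroC]
      rw [this, HC_zeroC]
  | @insert a s ha ih =>
      have hsplit : (fun s' t x y z => ∑ p ∈ insert a s, G p s' t x y z)
          = addC (G a) (fun s' t x y z => ∑ p ∈ s, G p s' t x y z) := by
        funext s' t x y z; simp [addC, Finset.sum_insert ha]
      rw [hsplit, HC_addC σ0 β0 b0 c0 lam0 ρ μ0 (hSm a (Finset.mem_insert_self a s))
          (Sm_finsum s G fun p hp => hSm p (Finset.mem_insert_of_mem hp)),
        h0 a (Finset.mem_insert_self a s),
        ih (fun p hp => hSm p (Finset.mem_insert_of_mem hp))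
          (fun p hp => h0 p (Finset.mem_insert_of_mem hp))]
      funext s' t x y z; simp [addC, zeroC]

def famG (σ0 β0 c0 lam0 ρ μ0 xbar ybar : ℝ) (v : R4) (p : ℕ × ℕ × ℕ) : Fam :=
  (MXC σ0 β0 μ0 ρ xbar)^[p.2.1] ((MYC σ0 β0 c0 lam0 ρ ybar)^[p.2.2] (fun _ => v))

def famW (σ0 β0 c0 lam0 ρ μ0 xbar ybar T : ℝ) (v : R4) (S : Finset (ℕ × ℕ × ℕ)) : Fam :=
  fun s t x y z => ∑ p ∈ S, (T - s)^p.1 * famG σ0 β0 c0 lam0 ρ μ0 xbar ybar v p s t x y z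

lemma famW_eval (σ0 β0 c0 lam0 ρ μ0 xbar ybar T : ℝ) (v : R4) (S : Finset (ℕ × ℕ × ℕ))
    (t x y z : ℝ) :
    famW σ0 β0 c0 lam0 ρ μ0 xbar ybar T v S t t x y z
      = ∑ p ∈ S, (T - t)^p.1 * (x - xbar)^p.2.1 * (y - ybar)^p.2.2 * v t x y z := by
  refine Finset.sum_congr rfl fun p _ => ?_
  have h1 : famG σ0 β0 c0 lam0 ρ μ0 xbar ybar v p t
      = (MXop σ0 β0 μ0 ρ xbar t)^[p.2.1] ((MYop σ0 β0 c0 lam0 ρ ybar t)^[p.2.2] v) := by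
    simp only [famG]
    rw [MXC_iter_apply, MYC_iter_apply]
  rw [h1, MXop_iter_eval σ0 β0 μ0 ρ xbar t x y z _ p.2.1,
    MYop_iter_eval σ0 β0 c0 lam0 ρ ybar t x y z v p.2.2]
  ring

end SSF

open SSF

/-- Duhamel-type representation: if `ℋ v = 0` and
`Q = Σ_{(n,k,l) ∈ S} (T-t)^n (x-x̄)^k (y-ȳ)^l v`, then
`q = Σ_{(n,k,l) ∈ S} ∫_t^T (T-s)^n ℳ_X(s)^k ℳ_Y(s)^l v ds`
satisfies `ℋ q + Q = 0` for `t < T` and `q(T, ·) = 0`. -/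


theorem source_solution_formula
    (T σ0 β0 μ0 b0 c0 lam0 ρ xbar ybar : ℝ)
    (hb0 : b0 = μ0 - σ0^2/2)
    (v : R4)
    (hv : ContDiff ℝ (⊤ : ℕ∞) (fun p : ℝ × ℝ × ℝ × ℝ => v p.1 p.2.1 p.2.2.1 p.2.2.2))
    (hsol : ∀ t x y z, Hop σ0 β0 b0 c0 lam0 ρ μ0 v t x y z = 0)
    (S : Finset (ℕ × ℕ × ℕ))
    (Q : R4)
    (hQ : ∀ t x y z, Q t x y z =
      ∑ p ∈ S, (T - t)^p.1 * (x - xbar)^p.2.1 * (y - ybar)^p.2.2 * v t x y z)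
    (q : R4)
    (hq : ∀ t x y z, q t x y z =
      ∑ p ∈ S, ∫ s in t..T, (T - s)^p.1 *
        ((MXop σ0 β0 μ0 ρ xbar s)^[p.2.1]
          ((MYop σ0 β0 c0 lam0 ρ ybar s)^[p.2.2] v)) t x y z) :
    (∀ t < T, ∀ (x y z : ℝ),
        Hop σ0 β0 b0 c0 lam0 ρ μ0 q t x y z + Q t x y z = 0) ∧
    (∀ x y z : ℝ, q T x y z = 0) := by
  have hvF : Sm (fun _ => v) := hv.comp contDiff_snd
  have hHv : HC σ0 β0 b0 c0 lam0 ρ μ0 (fun _ => v) = zeroC := by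
    funext s t' x' y' z'; exact hsol t' x' y' z'
  have hSmG : ∀ p : ℕ × ℕ × ℕ, Sm (famG σ0 β0 c0 lam0 ρ μ0 xbar ybar v p) :=
    fun p => Sm.mxc_iter σ0 β0 μ0 ρ xbar
      (Sm.myc_iter σ0 β0 c0 lam0 ρ ybar hvF p.2.2) p.2.1
  have hHG : ∀ p : ℕ × ℕ × ℕ,
      HC σ0 β0 b0 c0 lam0 ρ μ0 (famG σ0 β0 c0 lam0 ρ μ0 xbar ybar v p) = zeroC :=
    fun p => HC_mxc_iter_zero σ0 β0 b0 c0 lam0 ρ μ0 xbar hb0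
      (Sm.myc_iter σ0 β0 c0 lam0 ρ ybar hvF p.2.2)
      (HC_myc_iter_zero σ0 β0 b0 c0 lam0 ρ μ0 ybar hvF hHv p.2.2) p.2.1
  have hcpow : ∀ n : ℕ, ContDiff ℝ (⊤ : ℕ∞) (fun s : ℝ => (T - s)^n) :=
    fun n => (contDiff_const.sub contDiff_id).pow n
  have hSmWp : ∀ p : ℕ × ℕ × ℕ,
      Sm (smulS (fun s => (T - s)^p.1) (famG σ0 β0 c0 lam0 ρ μ0 xbar ybar v p)) :=
    fun p => Sm.smulS (hcpow p.1) (hSmG p)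
  have hHWp : ∀ p : ℕ × ℕ × ℕ,
      HC σ0 β0 b0 c0 lam0 ρ μ0
        (smulS (fun s => (T - s)^p.1) (famG σ0 β0 c0 lam0 ρ μ0 xbar ybar v p)) = zeroC := by
    intro p
    rw [HC_smulS σ0 β0 b0 c0 lam0 ρ μ0 (hcpow p.1) (hSmG p), hHG p, smulS_zeroC]
  have hSmW : Sm (famW σ0 β0 c0 lam0 ρ μ0 xbar ybar T v S) :=
    Sm_finsum S (fun p => smulS (fun s => (T - s)^p.1)
      (famG σ0 β0 c0 lam0 ρ μ0 xbar ybar v p)) (fun p _ => hSmWp p)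
  have hHW : HC σ0 β0 b0 c0 lam0 ρ μ0 (famW σ0 β0 c0 lam0 ρ μ0 xbar ybar T v S) = zeroC :=
    HC_finsum σ0 β0 b0 c0 lam0 ρ μ0 S (fun p => smulS (fun s => (T - s)^p.1)
      (famG σ0 β0 c0 lam0 ρ μ0 xbar ybar v p)) (fun p _ => hSmWp p) (fun p _ => hHWp p)
  have hq' : q = intW T (famW σ0 β0 c0 lam0 ρ μ0 xbar ybar T v S) := by
    funext t x y z
    rw [hq t x y z]
    have hiter : ∀ (p : ℕ × ℕ × ℕ) (s : ℝ),
        ((MXop σ0 β0 μ0 ρ xbar s)^[p.2.1] ((MYop σ0 β0 c0 lam0 ρ ybar s)^[p.2.2] v))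
          = famG σ0 β0 c0 lam0 ρ μ0 xbar ybar v p s := by
      intro p s
      simp only [famG]
      rw [MXC_iter_apply, MYC_iter_apply]
    simp only [hiter]
    rw [← intervalIntegral.integral_finset_sum
      (f := fun p s => (T - s) ^ p.1 * famG σ0 β0 c0 lam0 ρ μ0 xbar ybar v p s t x y z)
      (fun p _ => Sm.intInt (hSmWp p) t x y z t T)]
    rfl
  constructor
  · intro t _ht x y z
    rw [hq', hQ t x y z,
      Hop_intW σ0 β0 b0 c0 lam0 ρ μ0 T hSmW hHW t x y z,
      ← famW_eval σ0 β0 c0 lam0 ρ μ0 xbar ybar T v S t x y z]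
    ring
  · intro x y z
    rw [hq T x y z]
    simp [intervalIntegral.integral_same]
end
end

section
/- Let constants λ₀, λ₁₀, λ₀₁, μ₀, σ₀, β₀, c₀, ρ, x̄, ȳ, T ∈ ℝ be given and let q⁽⁰⁾(t, z) be a smooth function solving the backward heat equation ∂_t q⁽⁰⁾ + (1/2) λ₀² ∂_z² q⁽⁰⁾ = 0. Define A(t, x, y) := λ₁₀ [(x - x̄) + (1/2)(T - t)(μ₀ - σ₀²/2)] + λ₀₁ [(y - ȳ) + (1/2)(T - t) c₀] and B := λ₁₀ μ₀ + λ₀₁ ρ β₀ λ₀. Then the function q⁽¹⁾(t, x, y, z) := (T - t) λ₀ A(t, x, y) ∂_z q⁽⁰⁾(t, z) + (1/2)(T - t)² λ₀ B ∂_z² q⁽⁰⁾(t, z) satisfies (∂_t + 𝒜₀ + 𝒞₀) q⁽¹⁾ + Q₁ = 0 with terminal condition q⁽¹⁾(T, x, y, z) = 0, where Q₁(t, x, y, z) := [λ₀ λ₁₀ (x - x̄) + λ₀ λ₀₁ (y - ȳ)] ∂_z q⁽⁰⁾(t, z), 𝒜₀ := (1/2)σ₀² ∂_x² + ρσ₀β₀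 ∂_x∂_y + (1/2)β₀² ∂_y² + (μ₀ - σ₀²/2) ∂_x + c₀ ∂_y, and 𝒞₀ := (1/2)λ₀² ∂_z² + ρβ₀λ₀ ∂_y∂_z + μ₀ ∂_x∂_z. -/
noncomputable section

/-- Partial derivative of `q⁰(t, z)` in the time variable. -/
def dT2 (f : ℝ → ℝ → ℝ) : ℝ → ℝ → ℝ := fun t z => deriv (fun s => f s z) t

/-- Partial derivative of `q⁰(t, z)` in the `z` variable. -/
def dZ2 (f : ℝ → ℝ → ℝ) : ℝ → ℝ → ℝ := fun t z => deriv (fun u => f t u) z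

/- ### Auxiliary lemmas -/

lemma h1top : ((⊤:ℕ∞):WithTop ℕ∞) ≠ 0 := by simp
lemma h1top' : ((⊤:ℕ∞):WithTop ℕ∞) + 1 ≤ ((⊤:ℕ∞):WithTop ℕ∞) := by exact_mod_cast le_top
lemma h2top : (2:WithTop ℕ∞) ≤ ((⊤:ℕ∞):WithTop ℕ∞) := by norm_cast

lemma inclZ (t z : ℝ) : HasDerivAt (fun u : ℝ => ((t, u) : ℝ × ℝ)) (0, 1) z :=
  (hasDerivAt_const z t).prodMk (hasDerivAt_id z)
lemma inclT (t z : ℝ) : HasDerivAt (fun s : ℝ => ((s, z) : ℝ × ℝ)) (1, 0) t :=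
  (hasDerivAt_id t).prodMk (hasDerivAt_const t z)

variable {f : ℝ → ℝ → ℝ}

lemma sliceZ_fd (hf : ContDiff ℝ (⊤:ℕ∞) (fun p : ℝ×ℝ => f p.1 p.2)) (t z : ℝ) :
    HasDerivAt (fun u => f t u) (fderiv ℝ (fun p : ℝ×ℝ => f p.1 p.2) (t,z) (0,1)) z :=
  ((hf.differentiable h1top (t,z)).hasFDerivAt).comp_hasDerivAt z (inclZ t z)

lemma sliceT_fd (hf : ContDiff ℝ (⊤:ℕ∞) (fun p : ℝ×ℝ => f p.1 p.2)) (t z : ℝ) :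
    HasDerivAt (fun s => f s z) (fderiv ℝ (fun p : ℝ×ℝ => f p.1 p.2) (t,z) (1,0)) t :=
  ((hf.differentiable h1top (t,z)).hasFDerivAt).comp_hasDerivAt (l := fun p : ℝ×ℝ => f p.1 p.2) t (inclT t z)

lemma sliceZ (hf : ContDiff ℝ (⊤:ℕ∞) (fun p : ℝ×ℝ => f p.1 p.2)) (t z : ℝ) :
    HasDerivAt (fun u => f t u) (dZ2 f t z) z := by
  have h := sliceZ_fd hf t z
  have e : dZ2 f t z = fderiv ℝ (fun p : ℝ×ℝ => f p.1 p.2) (t,z) (0,1) := h.deriv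
  rw [e]; exact h

lemma sliceT (hf : ContDiff ℝ (⊤:ℕ∞) (fun p : ℝ×ℝ => f p.1 p.2)) (t z : ℝ) :
    HasDerivAt (fun s => f s z) (dT2 f t z) t := by
  have h := sliceT_fd hf t z
  have e : dT2 f t z = fderiv ℝ (fun p : ℝ×ℝ => f p.1 p.2) (t,z) (1,0) := h.deriv
  rw [e]; exact h

lemma smooth_dZ2 (hf : ContDiff ℝ (⊤:ℕ∞) (fun p : ℝ×ℝ => f p.1 p.2)) :
    ContDiff ℝ (⊤:ℕ∞) (fun p : ℝ×ℝ => dZ2 f p.1 p.2) := by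
  have e : (fun p : ℝ×ℝ => dZ2 f p.1 p.2)
      = fun p : ℝ×ℝ => fderiv ℝ (fun p : ℝ×ℝ => f p.1 p.2) p (0,1) := by
    funext p
    exact (sliceZ_fd hf p.1 p.2).deriv
  rw [e]
  exact (hf.fderiv_right h1top').clm_apply contDiff_const

lemma smooth_dT2 (hf : ContDiff ℝ (⊤:ℕ∞) (fun p : ℝ×ℝ => f p.1 p.2)) :
    ContDiff ℝ (⊤:ℕ∞) (fun p : ℝ×ℝ => dT2 f p.1 p.2) := by
  have e : (fun p : ℝ×ℝ => dT2 f p.1 p.2)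
      = fun p : ℝ×ℝ => fderiv ℝ (fun p : ℝ×ℝ => f p.1 p.2) p (1,0) := by
    funext p
    exact (sliceT_fd hf p.1 p.2).deriv
  rw [e]
  exact (hf.fderiv_right h1top').clm_apply contDiff_const

lemma fderiv_apply_vec {F : ℝ×ℝ → ℝ} (hF : ContDiff ℝ (⊤:ℕ∞) F) (p v w : ℝ×ℝ) :
    fderiv ℝ (fun q => fderiv ℝ F q v) p w = fderiv ℝ (fderiv ℝ F) p w v := by
  have hdF : DifferentiableAt ℝ (fderiv ℝ F) p :=
    (hF.fderiv_right h1top').differentiable h1top p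
  have hc : HasFDerivAt (fun q => fderiv ℝ F q v)
      ((ContinuousLinearMap.apply ℝ ℝ v).comp (fderiv ℝ (fderiv ℝ F) p)) p :=
    (ContinuousLinearMap.apply ℝ ℝ v).hasFDerivAt.comp p hdF.hasFDerivAt
  rw [hc.fderiv]
  rfl

/-- Clairaut / symmetry of mixed partial derivatives for a smooth two-variable function. -/
lemma mixed (hf : ContDiff ℝ (⊤:ℕ∞) (fun p : ℝ×ℝ => f p.1 p.2)) (t z : ℝ) :
    dT2 (dZ2 f) t z = dZ2 (dT2 f) t z := by
  set F : ℝ×ℝ → ℝ := fun p => f p.1 p.2 with hF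
  have eZ : (fun p : ℝ×ℝ => dZ2 f p.1 p.2) = fun p : ℝ×ℝ => fderiv ℝ F p (0,1) := by
    funext p; exact (sliceZ_fd hf p.1 p.2).deriv
  have eT : (fun p : ℝ×ℝ => dT2 f p.1 p.2) = fun p : ℝ×ℝ => fderiv ℝ F p (1,0) := by
    funext p; exact (sliceT_fd hf p.1 p.2).deriv
  have l1 : dT2 (dZ2 f) t z = fderiv ℝ (fun p : ℝ×ℝ => dZ2 f p.1 p.2) (t,z) (1,0) :=
    (sliceT_fd (smooth_dZ2 hf) t z).deriv
  have l2 : dZ2 (dT2 f) t z = fderiv ℝ (fun p : ℝ×ℝ => dT2 f p.1 p.2) (t,z) (0,1) :=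
    (sliceZ_fd (smooth_dT2 hf) t z).deriv
  rw [l1, l2, eZ, eT, fderiv_apply_vec hf, fderiv_apply_vec hf]
  exact ((hf.contDiffAt).isSymmSndFDerivAt (by simpa using h2top)).eq _ _

lemma hasDerivAt_affine0 {φ : ℝ → ℝ} {c : ℝ} (h : ∀ u, φ u = c * u + φ 0) (x : ℝ) :
    HasDerivAt φ c x := by
  have h0 : HasDerivAt (fun u : ℝ => c * u + φ 0) c x := by
    simpa using ((hasDerivAt_id x).const_mul c).add_const (φ 0)
  exact h0.congr_of_eventuallyEq (Filter.Eventually.of_forall h)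

lemma deriv_affine0 {φ : ℝ → ℝ} {c : ℝ} (h : ∀ u, φ u = c * u + φ 0) (x : ℝ) :
    deriv φ x = c := (hasDerivAt_affine0 h x).deriv

/-- The explicit first-order correction `q¹` solves
`(∂_t + 𝒜₀ + 𝒞₀) q¹ + Q₁ = 0` with `q¹(T, ·) = 0`. -/
theorem first_order_term_solves_PDE
    (T lam0 lam10 lam01 μ0 σ0 β0 c0 ρ xbar ybar : ℝ)
    (q0 : ℝ → ℝ → ℝ)
    (hq0smooth : ContDiff ℝ (⊤ : ℕ∞) (fun p : ℝ × ℝ => q0 p.1 p.2))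
    (hheat : ∀ t z, dT2 q0 t z + (1/2) * lam0^2 * dZ2 (dZ2 q0) t z = 0)
    (A : ℝ → ℝ → ℝ → ℝ)
    (hA : ∀ t x y, A t x y =
      lam10 * ((x - xbar) + (1/2) * (T - t) * (μ0 - σ0^2/2))
      + lam01 * ((y - ybar) + (1/2) * (T - t) * c0))
    (B : ℝ) (hB : B = lam10 * μ0 + lam01 * ρ * β0 * lam0)
    (q1 : R4)
    (hq1 : ∀ t x y z, q1 t x y z =
      (T - t) * lam0 * A t x y * dZ2 q0 t z
      + (1/2) * (T - t)^2 * lam0 * B * dZ2 (dZ2 q0) t z)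
    (Q1 : R4)
    (hQ1 : ∀ t x y z, Q1 t x y z =
      (lam0 * lam10 * (x - xbar) + lam0 * lam01 * (y - ybar)) * dZ2 q0 t z) :
    (∀ t x y z : ℝ,
      d4T q1 t x y z
        + ((1/2) * σ0^2 * d4X (d4X q1) t x y z
            + ρ * σ0 * β0 * d4X (d4Y q1) t x y z
            + (1/2) * β0^2 * d4Y (d4Y q1) t x y z
            + (μ0 - σ0^2/2) * d4X q1 t x y z
            + c0 * d4Y q1 t x y z)
        + ((1/2) * lam0^2 * d4Z (d4Z q1) t x y z
            + ρ * β0 * lam0 * d4Y (d4Z q1) t x y z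
            + μ0 * d4X (d4Z q1) t x y z)
        + Q1 t x y z = 0) ∧
    (∀ x y z : ℝ, q1 T x y z = 0) := by
  -- shorthand for iterated z-derivatives of q0 and their smoothness
  have hg2 : ContDiff ℝ (⊤:ℕ∞) (fun p : ℝ×ℝ => dZ2 q0 p.1 p.2) := smooth_dZ2 hq0smooth
  have hh2 : ContDiff ℝ (⊤:ℕ∞) (fun p : ℝ×ℝ => dZ2 (dZ2 q0) p.1 p.2) := smooth_dZ2 hg2
  have hk2 : ContDiff ℝ (⊤:ℕ∞) (fun p : ℝ×ℝ => dZ2 (dZ2 (dZ2 q0)) p.1 p.2) := smooth_dZ2 hh2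
  -- time derivative of ∂_z q0 via commuting derivatives and the heat equation
  have hTg : ∀ t z, dT2 (dZ2 q0) t z
      = -((1/2) * lam0^2) * dZ2 (dZ2 (dZ2 q0)) t z := by
    intro t z
    rw [mixed hq0smooth]
    have e : (fun u => dT2 q0 t u)
        = fun u => -((1/2) * lam0^2) * dZ2 (dZ2 q0) t u := by
      funext u; linarith [hheat t u]
    show deriv (fun u => dT2 q0 t u) z = _
    rw [e]
    exact ((sliceZ hh2 t z).const_mul (-((1/2) * lam0^2))).deriv
  have hTh : ∀ t z, dT2 (dZ2 (dZ2 q0)) t z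
      = -((1/2) * lam0^2) * dZ2 (dZ2 (dZ2 (dZ2 q0))) t z := by
    intro t z
    rw [mixed hg2]
    have e : (fun u => dT2 (dZ2 q0) t u)
        = fun u => -((1/2) * lam0^2) * dZ2 (dZ2 (dZ2 q0)) t u := by
      funext u; exact hTg t u
    show deriv (fun u => dT2 (dZ2 q0) t u) z = _
    rw [e]
    exact ((sliceZ hk2 t z).const_mul (-((1/2) * lam0^2))).deriv
  -- first order x and y derivatives of q1
  have hX : ∀ t x y z, d4X q1 t x y z = (T - t) * lam0 * lam10 * dZ2 q0 t z := by
    intro t x y z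
    refine deriv_affine0 (fun u => ?_) x
    simp only [hq1, hA]; ring
  have hY : ∀ t x y z, d4Y q1 t x y z = (T - t) * lam0 * lam01 * dZ2 q0 t z := by
    intro t x y z
    refine deriv_affine0 (fun u => ?_) y
    simp only [hq1, hA]; ring
  -- second x,y derivatives vanish
  have hXX : ∀ t x y z, d4X (d4X q1) t x y z = 0 := by
    intro t x y z
    have e : (fun u => d4X q1 t u y z) = fun _ => (T - t) * lam0 * lam10 * dZ2 q0 t z :=
      funext fun u => hX t u y z
    show deriv (fun u => d4X q1 t u y z) x = 0
    rw [e]; exact deriv_const x _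
  have hXY : ∀ t x y z, d4X (d4Y q1) t x y z = 0 := by
    intro t x y z
    have e : (fun u => d4Y q1 t u y z) = fun _ => (T - t) * lam0 * lam01 * dZ2 q0 t z :=
      funext fun u => hY t u y z
    show deriv (fun u => d4Y q1 t u y z) x = 0
    rw [e]; exact deriv_const x _
  have hYY : ∀ t x y z, d4Y (d4Y q1) t x y z = 0 := by
    intro t x y z
    have e : (fun u => d4Y q1 t x u z) = fun _ => (T - t) * lam0 * lam01 * dZ2 q0 t z :=
      funext fun u => hY t x u z
    show deriv (fun u => d4Y q1 t x u z) y = 0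
    rw [e]; exact deriv_const y _
  -- z derivative of q1
  have hZ : ∀ t x y z, d4Z q1 t x y z =
      ((T - t) * lam0 * A t x y) * dZ2 (dZ2 q0) t z
      + ((1/2) * (T - t)^2 * lam0 * B) * dZ2 (dZ2 (dZ2 q0)) t z := by
    intro t x y z
    have H : HasDerivAt
        (fun u => ((T - t) * lam0 * A t x y) * dZ2 q0 t u
          + ((1/2) * (T - t)^2 * lam0 * B) * dZ2 (dZ2 q0) t u)
        (((T - t) * lam0 * A t x y) * dZ2 (dZ2 q0) t z
          + ((1/2) * (T - t)^2 * lam0 * B) * dZ2 (dZ2 (dZ2 q0)) t z) z :=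
      ((sliceZ hg2 t z).const_mul _).add ((sliceZ hh2 t z).const_mul _)
    have H' := H.congr_of_eventuallyEq (Filter.Eventually.of_forall
      (fun u => by rw [hq1] : ∀ u, q1 t x y u = _))
    exact H'.deriv
  -- second z derivative
  have hZZ : ∀ t x y z, d4Z (d4Z q1) t x y z =
      ((T - t) * lam0 * A t x y) * dZ2 (dZ2 (dZ2 q0)) t z
      + ((1/2) * (T - t)^2 * lam0 * B) * dZ2 (dZ2 (dZ2 (dZ2 q0))) t z := by
    intro t x y z
    have H : HasDerivAt
        (fun u => ((T - t) * lam0 * A t x y) * dZ2 (dZ2 q0) t u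
          + ((1/2) * (T - t)^2 * lam0 * B) * dZ2 (dZ2 (dZ2 q0)) t u)
        (((T - t) * lam0 * A t x y) * dZ2 (dZ2 (dZ2 q0)) t z
          + ((1/2) * (T - t)^2 * lam0 * B) * dZ2 (dZ2 (dZ2 (dZ2 q0))) t z) z :=
      ((sliceZ hh2 t z).const_mul _).add ((sliceZ hk2 t z).const_mul _)
    have H' := H.congr_of_eventuallyEq (Filter.Eventually.of_forall
      (fun u => by rw [hZ t x y u] : ∀ u, d4Z q1 t x y u = _))
    exact H'.deriv
  -- mixed y-z and x-z derivatives
  have hYZ : ∀ t x y z, d4Y (d4Z q1) t x y z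
      = (T - t) * lam0 * lam01 * dZ2 (dZ2 q0) t z := by
    intro t x y z
    refine deriv_affine0 (fun u => ?_) y
    simp only [hZ, hA]; ring
  have hXZ : ∀ t x y z, d4X (d4Z q1) t x y z
      = (T - t) * lam0 * lam10 * dZ2 (dZ2 q0) t z := by
    intro t x y z
    refine deriv_affine0 (fun u => ?_) x
    simp only [hZ, hA]; ring
  -- time derivative of q1
  have hT : ∀ t x y z, d4T q1 t x y z =
      -(lam0 * A t x y * dZ2 q0 t z)
      - (T - t) * lam0 * ((1/2) * (lam10 * (μ0 - σ0^2/2) + lam01 * c0)) * dZ2 q0 t z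
      - (T - t) * lam0 * A t x y * ((1/2) * lam0^2) * dZ2 (dZ2 (dZ2 q0)) t z
      - (T - t) * lam0 * B * dZ2 (dZ2 q0) t z
      - (1/2) * (T - t)^2 * lam0 * B * ((1/2) * lam0^2) * dZ2 (dZ2 (dZ2 (dZ2 q0))) t z := by
    intro t x y z
    have hTs : HasDerivAt (fun s : ℝ => T - s) (-1) t := (hasDerivAt_id t).const_sub T
    have H1 : HasDerivAt (fun s : ℝ => (T - s) * lam0) ((-1) * lam0) t := hTs.mul_const lam0
    have HA : HasDerivAt (fun s : ℝ =>
        lam10 * ((x - xbar) + (1/2) * (T - s) * (μ0 - σ0^2/2))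
        + lam01 * ((y - ybar) + (1/2) * (T - s) * c0))
        (-((1/2) * (lam10 * (μ0 - σ0^2/2) + lam01 * c0))) t := by
      refine hasDerivAt_affine0 (fun u => ?_) t
      ring
    have Hg : HasDerivAt (fun s => dZ2 q0 s z) (dT2 (dZ2 q0) t z) t := sliceT hg2 t z
    have Hh : HasDerivAt (fun s => dZ2 (dZ2 q0) s z) (dT2 (dZ2 (dZ2 q0)) t z) t :=
      sliceT hh2 t z
    have Hq : HasDerivAt (fun s : ℝ => (1/2) * (T - s)^2 * (lam0 * B))
        (((1/2) * ((2:ℕ) * (T - t)^(2-1) * (-1))) * (lam0 * B)) t :=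
      ((hTs.pow 2).const_mul (1/2)).mul_const (lam0 * B)
    have H : HasDerivAt (fun s : ℝ =>
        (T - s) * lam0 * (lam10 * ((x - xbar) + (1/2) * (T - s) * (μ0 - σ0^2/2))
          + lam01 * ((y - ybar) + (1/2) * (T - s) * c0)) * dZ2 q0 s z
        + (1/2) * (T - s)^2 * (lam0 * B) * dZ2 (dZ2 q0) s z) _ t :=
      ((H1.mul HA).mul Hg).add (Hq.mul Hh)
    have H' := H.congr_of_eventuallyEq (Filter.Eventually.of_forall
      (fun s => by rw [hq1, hA]; ring : ∀ s, q1 s x y z = _))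
    have e := H'.deriv
    show deriv (fun s => q1 s x y z) t = _
    rw [e, hTg t z, hTh t z, hA]
    push_cast
    simp only [Pi.mul_apply]
    ring
  refine ⟨?_, ?_⟩
  · intro t x y z
    rw [hT t x y z, hXX t x y z, hXY t x y z, hYY t x y z, hX t x y z, hY t x y z,
      hZZ t x y z, hYZ t x y z, hXZ t x y z, hQ1 t x y z, hA t x y, hB]
    ring
  · intro x y z
    rw [hq1]
    ring
end
end
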